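/- Let S = stack(P,Q) ∈ SYT^stacked(2r×c) where P, Q ∈ SYT(r×c) and n = rc, and let ρ_i := prom_i(S) ∈ S_{2n} for 1 ≤ i ≤ 2r−1. Then for all 0 ≤ k ≤ r−1, the point set 𝒫^NE(ρ_{r−k}) equals the k-th iterated skeleton 𝒮^k(𝒫^NE(ρ_r), ↙) with respect to light shining southwest. -/
import Mathlib


namespace PromRS

/-! ## Rectangular standard Young tableaux (as functions; 0-indexed cells; entries 1..R*C) -/

/-- `T` is a standard Young tableau of rectangular shape with `R` rows and `C` columns:
rows and columns strictly increase, and the entries on the `R × C` rectangle are a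
bijection onto `{1, …, R*C}`. -/
def IsSYT (R C : ℕ) (T : ℕ → ℕ → ℕ) : Prop :=
  (∀ i j, i < R → j + 1 < C → T i j < T i (j + 1)) ∧
  (∀ i j, i + 1 < R → j < C → T i j < T (i + 1) j) ∧
  Set.BijOn (fun p : ℕ × ℕ => T p.1 p.2) {p : ℕ × ℕ | p.1 < R ∧ p.2 < C} (Set.Icc 1 (R * C))

/-- Stacking: add `r*c` to every entry of `Q` and place the result below `P`. -/
def stack (r c : ℕ) (P Q : ℕ → ℕ → ℕ) : ℕ → ℕ → ℕ := fun i j =>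
  if i < r then P i j else Q (i - r) j + r * c

/-! ## Gromotion and promotion permutations -/

/-- Value of `T` at a cell, with `⊤` outside the `R × C` rectangle. -/
def ext (R C : ℕ) (T : ℕ → ℕ → ℕ) (p : ℕ × ℕ) : WithTop ℕ :=
  if p.1 < R ∧ p.2 < C then ((T p.1 p.2 : ℕ) : WithTop ℕ) else ⊤

/-- The jeu de taquin slide moves the empty cell to the smaller of its east/south neighbors. -/
def nextCell (R C : ℕ) (T : ℕ → ℕ → ℕ) (p : ℕ × ℕ) : ℕ × ℕ :=
  if ext R C T (p.1, p.2 + 1) < ext R C T (p.1 + 1, p.2) then (p.1, p.2 + 1)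
  else (p.1 + 1, p.2)

/-- The sliding path of the empty cell, starting at the top-left corner. -/
def slidePath (R C : ℕ) (T : ℕ → ℕ → ℕ) : ℕ → ℕ × ℕ
  | 0 => (0, 0)
  | k + 1 => nextCell R C T (slidePath R C T k)

def maxEntry (R C : ℕ) (T : ℕ → ℕ → ℕ) : ℕ :=
  ((Finset.range R) ×ˢ (Finset.range C)).sup fun p => T p.1 p.2

/-- Gromotion: delete the minimal entry (at the top-left corner), rectify by jeu de taquin
slides, and fill the vacated outer corner with (current maximum) + 1; entries are not
decremented. -/
def gromotion (R C : ℕ) (T : ℕ → ℕ → ℕ) : ℕ → ℕ → ℕ := fun i j =>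
  if i = R - 1 ∧ j = C - 1 then maxEntry R C T + 1
  else
    match (List.range (R + C - 2)).find? (fun k => decide (slidePath R C T k = (i, j))) with
    | some k => T (slidePath R C T (k + 1)).1 (slidePath R C T (k + 1)).2
    | none => T i j

/-- The entry that slides (up) into row `i` (1-indexed) during one gromotion slide of `T`:
the value of `T` at the first cell of the sliding path lying in 0-indexed row `i`. -/
def slideInto (R C : ℕ) (T : ℕ → ℕ → ℕ) (i : ℕ) : ℕ :=
  match (List.range (R + C - 1)).find? (fun k => decide ((slidePath R C T k).1 = i)) with
  | some k => T (slidePath R C T k).1 (slidePath R C T k).2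
  | none => 0

/-- The `i`-th promotion permutation of `T ∈ SYT(R × C)`: its value at `j` is the entry
that slides into row `i` when computing `gromotion^j(T)`, taken modulo `R*C` with
residues in `{1, …, R*C}`. -/
def promPerm (R C : ℕ) (T : ℕ → ℕ → ℕ) (i : ℕ) : ℕ → ℕ := fun j =>
  (slideInto R C ((gromotion R C)^[j - 1] T) i - 1) % (R * C) + 1

/-! ## Tableaux as lists of rows, Robinson–Schensted insertion -/

/-- Entry of a list-of-rows tableau (0-indexed; `0` outside). -/
def entryL (T : List (List ℕ)) (i j : ℕ) : ℕ := (T.getD i []).getD j 0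

/-- Convert a function tableau on an `R × C` rectangle to a list of rows. -/
def toListT (R C : ℕ) (T : ℕ → ℕ → ℕ) : List (List ℕ) :=
  (List.range R).map fun i => (List.range C).map fun j => T i j

/-- Transpose (conjugate) of a list-of-rows tableau. -/
def transposeT (T : List (List ℕ)) : List (List ℕ) :=
  (List.range (T.getD 0 []).length).map fun j => T.filterMap fun row => row[j]?

/-- Shape (row lengths) of a list-of-rows tableau. -/
def shapeL (T : List (List ℕ)) : List ℕ := T.map List.length

/-- Standard Young tableau, as a list of rows: weakly decreasing nonempty row lengths,
rows and columns strictly increasing, and entries exactly `{1, …, N}` where `N` is the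
number of cells. -/
def IsSYTList (T : List (List ℕ)) : Prop :=
  (∀ i, i + 1 < T.length → (T.getD (i + 1) []).length ≤ (T.getD i []).length) ∧
  (∀ row ∈ T, row ≠ []) ∧
  (∀ i j, i < T.length → j + 1 < (T.getD i []).length → entryL T i j < entryL T i (j + 1)) ∧
  (∀ i j, i + 1 < T.length → j < (T.getD (i + 1) []).length →
    entryL T i j < entryL T (i + 1) j) ∧
  T.flatten.Nodup ∧ (∀ m, m ∈ T.flatten ↔ 1 ≤ m ∧ m ≤ T.flatten.length)

/-- Schensted row insertion of `x` into a tableau. -/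
def rowInsert : List (List ℕ) → ℕ → List (List ℕ)
  | [], x => [[x]]
  | r :: rs, x =>
    match r.dropWhile (fun y => decide (y < x)) with
    | [] => (r ++ [x]) :: rs
    | y :: bs => (r.takeWhile (fun y => decide (y < x)) ++ x :: bs) :: rowInsert rs y

/-- The (0-indexed) row where the shape grew when passing from `P` to `P'`. -/
def rowOfNewCell (P P' : List (List ℕ)) : ℕ :=
  ((List.range P'.length).find? fun i =>
    decide ((P'.getD i []).length ≠ (P.getD i []).length)).getD 0

def placeInRow (Q : List (List ℕ)) (r k : ℕ) : List (List ℕ) :=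
  if r < Q.length then Q.set r (Q.getD r [] ++ [k]) else Q ++ [[k]]

/-- The Robinson–Schensted correspondence: the pair (insertion tableau, recording tableau)
of a word. -/
def RS (w : List ℕ) : List (List ℕ) × List (List ℕ) :=
  (List.range w.length).foldl
    (fun PQ i =>
      let P' := rowInsert PQ.1 (w.getD i 0)
      (P', placeInRow PQ.2 (rowOfNewCell PQ.1 P') (i + 1)))
    ([], [])

/-! ## Jeu de taquin on list tableaux; evacuation -/

def extL (T : List (List ℕ)) (p : ℕ × ℕ) : WithTop ℕ :=
  if p.2 < (T.getD p.1 []).length then ((entryL T p.1 p.2 : ℕ) : WithTop ℕ) else ⊤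

def nextCellL (T : List (List ℕ)) (p : ℕ × ℕ) : ℕ × ℕ :=
  if extL T (p.1, p.2 + 1) = ⊤ ∧ extL T (p.1 + 1, p.2) = ⊤ then p
  else if extL T (p.1, p.2 + 1) < extL T (p.1 + 1, p.2) then (p.1, p.2 + 1)
  else (p.1 + 1, p.2)

def jdtPath (T : List (List ℕ)) : ℕ → ℕ × ℕ
  | 0 => (0, 0)
  | k + 1 => nextCellL T (jdtPath T k)

/-- The outer corner vacated when the minimal entry of `T` is deleted and the tableau is
rectified by jeu de taquin slides. -/
def vacated (T : List (List ℕ)) : ℕ × ℕ := jdtPath T T.flatten.length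

/-- The value at cell `(i, j)` after the rectification slide. -/
def slidValue (T : List (List ℕ)) (i j : ℕ) : ℕ :=
  match (List.range T.flatten.length).find? (fun k =>
      decide (jdtPath T k = (i, j) ∧ jdtPath T (k + 1) ≠ (i, j))) with
  | some k => entryL T (jdtPath T (k + 1)).1 (jdtPath T (k + 1)).2
  | none => entryL T i j

/-- Delete the minimal entry of `T` and rectify. -/
def delta (T : List (List ℕ)) : List (List ℕ) :=
  ((List.range T.length).map fun i =>
    (List.range ((T.getD i []).length - if i = (vacated T).1 then 1 else 0)).map fun j =>
      slidValue T i j).filter fun row => decide (row ≠ [])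

/-- The entry of the evacuation `∂T` at cell `(i,j)`: `n + 1 - k` where the `k`-th
deletion-rectification vacates `(i,j)`. -/
def evacEntry (T : List (List ℕ)) (i j : ℕ) : ℕ :=
  match (List.range T.flatten.length).find? (fun k =>
      decide (vacated (delta^[k] T) = (i, j))) with
  | some k => T.flatten.length - k
  | none => 0

/-- Schützenberger evacuation `∂T` of a standard Young tableau. -/
def evacL (T : List (List ℕ)) : List (List ℕ) :=
  (List.range T.length).map fun i =>
    (List.range (T.getD i []).length).map fun j => evacEntry T i j

/-! ## Shadow lines, skeleta, and Viennot's construction -/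

def dirNE (a b : ℤ × ℤ) : Prop := a.1 ≤ b.1 ∧ a.2 ≤ b.2
def dirSE (a b : ℤ × ℤ) : Prop := a.1 ≤ b.1 ∧ b.2 ≤ a.2
def dirSW (a b : ℤ × ℤ) : Prop := b.1 ≤ a.1 ∧ b.2 ≤ a.2
def dirNW (a b : ℤ × ℤ) : Prop := b.1 ≤ a.1 ∧ a.2 ≤ b.2

def minimalsUnder (d : ℤ × ℤ → ℤ × ℤ → Prop) (P : Set (ℤ × ℤ)) : Set (ℤ × ℤ) :=
  {p ∈ P | ∀ q ∈ P, d q p → q = p}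

/-- `P` minus its first `j` shadow lines. -/
def shadowRest (d : ℤ × ℤ → ℤ × ℤ → Prop) (P : Set (ℤ × ℤ)) : ℕ → Set (ℤ × ℤ)
  | 0 => P
  | j + 1 => shadowRest d P j \ minimalsUnder d (shadowRest d P j)

/-- The `j`-th shadow line of `P` (1-indexed `j`). -/
def shadowLine (d : ℤ × ℤ → ℤ × ℤ → Prop) (P : Set (ℤ × ℤ)) (j : ℕ) : Set (ℤ × ℤ) :=
  minimalsUnder d (shadowRest d P (j - 1))

/-- The skeleton of a single shadow line `L`: the minimal elements of the set of points
covered by the shadows of at least two points of `L`. -/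
def lineSkeleton (d : ℤ × ℤ → ℤ × ℤ → Prop) (L : Set (ℤ × ℤ)) : Set (ℤ × ℤ) :=
  minimalsUnder d {x | ∃ p ∈ L, ∃ q ∈ L, p ≠ q ∧ d p x ∧ d q x}

/-- The skeleton of `P`: the union of the skeleta of its shadow lines. -/
def skeleton (d : ℤ × ℤ → ℤ × ℤ → Prop) (P : Set (ℤ × ℤ)) : Set (ℤ × ℤ) :=
  ⋃ j : ℕ, lineSkeleton d (shadowLine d P (j + 1))

/-- The `k`-th iterated skeleton of `P`. -/
def skeletonIter (d : ℤ × ℤ → ℤ × ℤ → Prop) (P : Set (ℤ × ℤ)) (k : ℕ) : Set (ℤ × ℤ) :=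
  (skeleton d)^[k] P

def IsMinSnd (L : Set (ℤ × ℤ)) (y : ℤ) : Prop := (∃ p ∈ L, p.2 = y) ∧ ∀ p ∈ L, y ≤ p.2
def IsMaxSnd (L : Set (ℤ × ℤ)) (y : ℤ) : Prop := (∃ p ∈ L, p.2 = y) ∧ ∀ p ∈ L, p.2 ≤ y
def IsMinFst (L : Set (ℤ × ℤ)) (x : ℤ) : Prop := (∃ p ∈ L, p.1 = x) ∧ ∀ p ∈ L, x ≤ p.1
def IsMaxFst (L : Set (ℤ × ℤ)) (x : ℤ) : Prop := (∃ p ∈ L, p.1 = x) ∧ ∀ p ∈ L, p.1 ≤ x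

/-- The set of exit coordinates (specified by `spec`) of the shadow lines of the `i`-th
iterated skeleton of `P` in direction `d`. -/
def exitSet (spec : Set (ℤ × ℤ) → ℤ → Prop) (d : ℤ × ℤ → ℤ × ℤ → Prop)
    (P : Set (ℤ × ℤ)) (i : ℕ) : Set ℤ :=
  {v | ∃ j : ℕ, spec (shadowLine d (skeletonIter d P i) (j + 1)) v}

/-- The word read off along one edge in Viennot's construction is the lattice word of the
standard tableau `T`: there is an enumeration `e` of all shadow-line exit coordinates,
in the order prescribed by `lt`, such that the `m`-th exit belongs to a shadow line of the
`i`-th iterated skeleton exactly when the entry `m` of `T` lies in row `i + 1`. -/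
def ReadsWord (spec : Set (ℤ × ℤ) → ℤ → Prop) (lt : ℤ → ℤ → Prop)
    (d : ℤ × ℤ → ℤ × ℤ → Prop) (P : Set (ℤ × ℤ)) (T : List (List ℕ)) : Prop :=
  ∃ e : Fin T.flatten.length → ℤ,
    (∀ a b : Fin T.flatten.length, a < b → lt (e a) (e b)) ∧
    (Set.range e = ⋃ i : ℕ, exitSet spec d P i) ∧
    ∀ (m : Fin T.flatten.length) (i : ℕ), e m ∈ exitSet spec d P i →
      (T.findIdx fun row => row.contains (m.1 + 1)) + 1 = i + 1

/-- `𝒱(𝒫, ↗) = (Pt, Qt)`: the P-word is read bottom-to-top along the right edge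
(east exit heights, which are the minimal `y`-coordinates of the lines), the Q-word
left-to-right along the top edge (north exits at minimal `x`-coordinates). -/
def ViennotNE (P : Set (ℤ × ℤ)) (Pt Qt : List (List ℕ)) : Prop :=
  ReadsWord IsMinSnd (· < ·) dirNE P Pt ∧ ReadsWord IsMinFst (· < ·) dirNE P Qt

/-- `𝒱(𝒫, ↘) = (Pt, Qt)`: P-word left-to-right along the bottom edge, Q-word
top-to-bottom along the right edge. -/
def ViennotSE (P : Set (ℤ × ℤ)) (Pt Qt : List (List ℕ)) : Prop :=
  ReadsWord IsMinFst (· < ·) dirSE P Pt ∧ ReadsWord IsMaxSnd (· > ·) dirSE P Qt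

/-- `𝒱(𝒫, ↙) = (Pt, Qt)`: P-word bottom-to-top along the left edge, Q-word
right-to-left along the bottom edge. -/
def ViennotSW (P : Set (ℤ × ℤ)) (Pt Qt : List (List ℕ)) : Prop :=
  ReadsWord IsMaxSnd (· < ·) dirSW P Pt ∧ ReadsWord IsMaxFst (· > ·) dirSW P Qt

/-- `𝒱(𝒫, ↖) = (Pt, Qt)`: P-word right-to-left along the top edge, Q-word
bottom-to-top along the left edge. -/
def ViennotNW (P : Set (ℤ × ℤ)) (Pt Qt : List (List ℕ)) : Prop :=
  ReadsWord IsMaxFst (· > ·) dirNW P Pt ∧ ReadsWord IsMinSnd (· < ·) dirNW P Qt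

/-- The point set `𝒫^NE(ρ)` of the northeast `n × n` block of the permutation matrix of
`ρ ∈ S_{2n}`, in Cartesian coordinates. -/
def pointsNE (n : ℕ) (f : ℕ → ℕ) : Set (ℤ × ℤ) :=
  {p | ∃ x : ℕ, 1 ≤ x ∧ x ≤ n ∧ n < f x ∧ p = ((f x : ℤ) - n, (n : ℤ) + 1 - x)}

/-! ## Crossings and nestings of perfect matchings -/

/-- The matching `{a, f a}` on `{1, …, N}` has a `k`-crossing:
blocks `{a₁ < b₁}, …, {a_k < b_k}` with `a₁ < ⋯ < a_k < b₁ < ⋯ < b_k`. -/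
def HasCrossing (f : ℕ → ℕ) (N k : ℕ) : Prop :=
  ∃ a b : Fin k → ℕ, StrictMono a ∧ StrictMono b ∧
    (∀ m, 1 ≤ a m ∧ b m ≤ N ∧ f (a m) = b m ∧ a m < b m) ∧
    ∀ m m' : Fin k, a m < b m'

/-- The matching `{a, f a}` on `{1, …, N}` has a `k`-nesting:
blocks `{a₁ < b₁}, …, {a_k < b_k}` with `a₁ < ⋯ < a_k < b_k < ⋯ < b₁`. -/
def HasNesting (f : ℕ → ℕ) (N k : ℕ) : Prop :=
  ∃ a b : Fin k → ℕ, StrictMono a ∧ StrictAnti b ∧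
    (∀ m, 1 ≤ a m ∧ b m ≤ N ∧ f (a m) = b m ∧ a m < b m) ∧
    ∀ m m' : Fin k, a m < b m'

/-! ## Local rules, the promotion–evacuation diagram, and the promotion matrix -/

/-- Partitions are encoded as lists of row lengths (fixed length, padded by zeros). -/
def sortDesc (l : List ℕ) : List ℕ := List.insertionSort (· ≥ ·) l

/-- The sequence `ν + κ - λ` (pointwise). -/
def ruleSeq (lam nu ka : List ℕ) : List ℕ :=
  List.zipWith (fun a b => a - b) (List.zipWith (· + ·) nu ka) lam

/-- The local rule: `μ = sort(ν + κ - λ)`. -/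
def localRule (lam nu ka : List ℕ) : List ℕ := sortDesc (ruleSeq lam nu ka)

/-- The decoration of a local rule square: `i` if `ν + κ - λ` fails to be sorted at rows
`i, i+1` (1-indexed), and `0` if no decoration is present. -/
def decoration (lam nu ka : List ℕ) : ℕ :=
  match (List.range (ruleSeq lam nu ka).length).find? (fun i =>
      decide ((ruleSeq lam nu ka).getD i 0 < (ruleSeq lam nu ka).getD (i + 1) 0)) with
  | some i => i + 1
  | none => 0

/-- Fill in the next row of the promotion–evacuation diagram from the previous row `prev`:
the new row starts with the empty partition at position `s` and continues by local rules. -/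
def nextRow (R : ℕ) (prev : ℕ → List ℕ) (s : ℕ) : ℕ → List ℕ
  | 0 => List.replicate R 0
  | x + 1 =>
    if x + 1 ≤ s then List.replicate R 0
    else localRule (prev x) (prev (x + 1)) (nextRow R prev s x)

/-- The `j`-th row of the promotion–evacuation diagram of `T ∈ SYT(R × C)`, as a function
of the column index (row `0` is the chain of `T`). -/
def PErow (R C : ℕ) (T : ℕ → ℕ → ℕ) : ℕ → ℕ → List ℕ
  | 0 => fun x => (List.range R).map fun i =>
      ((Finset.range C).filter fun j => T i j ≤ min x (R * C)).card
  | j + 1 => nextRow R (PErow R C T j) (j + 1)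

/-- For `S = stack(P, Q) ∈ SYT(2r × c)` and `n = r*c`, the `(n+1) × (n+1)` northeast block
of partitions `λ(x, y)` of `PEdiagram(S)` (Cartesian coordinates): `λ(x,y)` is the
diagram entry in row `n - y`, column `n + x`. -/
def lamBlock (r c : ℕ) (S : ℕ → ℕ → ℕ) (x y : ℕ) : List ℕ :=
  PErow (2 * r) c S (r * c - y) (r * c + x)

/-- The entry of `PM(S)^NE` at Cartesian coordinates `(x, y)`, `1 ≤ x, y ≤ n`: the
decoration of the local rule square with corners `λ(x-1, y-1)`, `λ(x-1, y)`, `λ(x, y-1)`,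
`λ(x, y)`. -/
def PMNE (r c : ℕ) (S : ℕ → ℕ → ℕ) (x y : ℕ) : ℕ :=
  decoration (lamBlock r c S (x - 1) y) (lamBlock r c S x y) (lamBlock r c S (x - 1) (y - 1))

/-- Chain of partitions of a list tableau: shape of the entries `≤ m`. -/
def chainOfL (T : List (List ℕ)) (m : ℕ) : List ℕ :=
  T.map fun row => (row.filter fun a => decide (a ≤ m)).length

/-- Column height `#{i : j < l i}` of a partition. -/
def colHeight (l : List ℕ) (j : ℕ) : ℕ := (l.filter fun a => decide (j < a)).length

/-- Vertical sum `l +' m` of two partitions (stack the columns of `m` onto those of `l`),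
computed inside a `rows × cols` bounding box. -/
def vsum (rows cols : ℕ) (l m : List ℕ) : List ℕ :=
  (List.range rows).map fun i =>
    ((List.range cols).filter fun j => decide (i < colHeight l j + colHeight m j)).length

/-! ## The point sets `S_k` and `S_{kj}` -/

/-- `x_{sj}`: the entry of `Q` in row `s`, column `j` (1-indexed). -/
def xEnt (Q : ℕ → ℕ → ℕ) (s j : ℕ) : ℤ := (Q (s - 1) (j - 1) : ℤ)

/-- `y_{tj}`: the entry of `∂(P)` in row `t`, column `j` (1-indexed). -/
def yEnt (r c : ℕ) (P : ℕ → ℕ → ℕ) (t j : ℕ) : ℤ :=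
  (entryL (evacL (toListT r c P)) (t - 1) (j - 1) : ℤ)

def Skj (r c : ℕ) (P Q : ℕ → ℕ → ℕ) (k j : ℕ) : Set (ℤ × ℤ) :=
  {p | ∃ s t : ℕ, 1 ≤ s ∧ s ≤ r ∧ 1 ≤ t ∧ t ≤ r ∧ s + t - 1 = k ∧
    p = (xEnt Q s j, yEnt r c P t j)}

def Sk (r c : ℕ) (P Q : ℕ → ℕ → ℕ) (k : ℕ) : Set (ℤ × ℤ) :=
  ⋃ j ∈ Set.Icc 1 c, Skj r c P Q k j

/-- A southeast chain of `k` ones in the matrix `U` (rows increase, columns increase),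
contained in a rectangle that fully fits into the strictly upper triangular part of the
`N × N` matrix. -/
def HasSEChain (U : ℕ → ℕ → ℕ) (N k : ℕ) : Prop :=
  ∃ a b : Fin k → ℕ, StrictMono a ∧ StrictMono b ∧ (∀ m, U (a m) (b m) = 1) ∧
    ∃ r₁ r₂ c₁ c₂ : ℕ, 1 ≤ r₁ ∧ r₂ < c₁ ∧ c₂ ≤ N ∧
      ∀ m, r₁ ≤ a m ∧ a m ≤ r₂ ∧ c₁ ≤ b m ∧ b m ≤ c₂

/-- A southwest chain of `k` ones in the matrix `U` (rows increase, columns decrease),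
contained in a rectangle that fully fits into the strictly upper triangular part of the
`N × N` matrix. -/
def HasSWChain (U : ℕ → ℕ → ℕ) (N k : ℕ) : Prop :=
  ∃ a b : Fin k → ℕ, StrictMono a ∧ StrictAnti b ∧ (∀ m, U (a m) (b m) = 1) ∧
    ∃ r₁ r₂ c₁ c₂ : ℕ, 1 ≤ r₁ ∧ r₂ < c₁ ∧ c₂ ≤ N ∧
      ∀ m, r₁ ≤ a m ∧ a m ≤ r₂ ∧ c₁ ≤ b m ∧ b m ≤ c₂

/-! ### Auxiliary development for Statement 5 -/

section Geometry

/-- Grid-monotonicity: strictly increasing along rows and down columns on an `r × c` grid. -/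
structure GMono (r c : ℕ) (A : ℕ → ℕ → ℕ) : Prop where
  row : ∀ s j j', s < r → j < j' → j' < c → A s j < A s j'
  col : ∀ s s' j, s < s' → s' < r → j < c → A s j < A s' j

/-- Points `(A s j, B t j)` with `s + t + 1 = m` over columns `j < J`. -/
def bandSet (A B : ℕ → ℕ → ℕ) (m J : ℕ) : Set (ℤ × ℤ) :=
  {p | ∃ s t j, j < J ∧ s + t + 1 = m ∧ p = ((A s j : ℤ), (B t j : ℤ))}

/-- Points `(A s J, B t J)` with `s + t + 1 = m` in a single column `J`. -/
def colSet (A B : ℕ → ℕ → ℕ) (m J : ℕ) : Set (ℤ × ℤ) :=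
  {p | ∃ s t, s + t + 1 = m ∧ p = ((A s J : ℤ), (B t J : ℤ))}

variable {r c m J : ℕ} {A B : ℕ → ℕ → ℕ}

lemma GMono.row_le (hA : GMono r c A) {s j j' : ℕ} (hs : s < r) (hj : j ≤ j') (hj' : j' < c) :
    A s j ≤ A s j' := by
  rcases eq_or_lt_of_le hj with h | h
  · subst h; exact le_rfl
  · exact (hA.row s j j' hs h hj').le

lemma GMono.col_le (hA : GMono r c A) {s s' j : ℕ} (hs : s ≤ s') (hs' : s' < r) (hj : j < c) :
    A s j ≤ A s' j := by
  rcases eq_or_lt_of_le hs with h | h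
  · subst h; exact le_rfl
  · exact (hA.col s s' j h hs' hj).le

lemma minimalsUnder_empty (d : ℤ × ℤ → ℤ × ℤ → Prop) : minimalsUnder d ∅ = ∅ := by
  simp [minimalsUnder]

lemma lineSkeleton_empty (d : ℤ × ℤ → ℤ × ℤ → Prop) : lineSkeleton d ∅ = ∅ := by
  simp [lineSkeleton, minimalsUnder]

lemma minimals_bandSet (hA : GMono r c A) (hB : GMono r c B) (hm : 1 ≤ m) (hmr : m ≤ r)
    (hJ : 1 ≤ J) (hJc : J ≤ c) :
    minimalsUnder dirSW (bandSet A B m J) = colSet A B m (J - 1) := by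
  ext p
  constructor
  · rintro ⟨⟨s, t, j, hj, hst, rfl⟩, hmin⟩
    -- if j < J - 1 the same (s,t) at column J-1 strictly dominates
    have hsr : s < r := by omega
    have htr : t < r := by omega
    rcases eq_or_lt_of_le (Nat.le_sub_one_of_lt hj) with h | h
    · exact ⟨s, t, hst, by rw [h]⟩
    · exfalso
      have hq : ((A s (J-1) : ℤ), (B t (J-1) : ℤ)) ∈ bandSet A B m J :=
        ⟨s, t, J - 1, by omega, hst, rfl⟩
      have h1 : A s j < A s (J-1) := hA.row s j (J-1) hsr h (by omega)
      have h2 : B t j < B t (J-1) := hB.row t j (J-1) htr h (by omega)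
      have := hmin _ hq ⟨by show ((A s j : ℤ)) ≤ ((A s (J-1) : ℤ)); exact_mod_cast h1.le,
        by show ((B t j : ℤ)) ≤ ((B t (J-1) : ℤ)); exact_mod_cast h2.le⟩
      rw [Prod.mk.injEq] at this
      have := this.1
      simp only [Int.natCast_inj] at this
      omega
  · rintro ⟨s, t, hst, rfl⟩
    have hsr : s < r := by omega
    have htr : t < r := by omega
    refine ⟨⟨s, t, J - 1, by omega, hst, rfl⟩, ?_⟩
    rintro q ⟨s', t', j', hj', hst', rfl⟩ ⟨h1, h2⟩
    have hs'r : s' < r := by omega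
    have ht'r : t' < r := by omega
    have h1' : A s (J-1) ≤ A s' j' := by
      exact_mod_cast (show ((A s (J-1) : ℤ)) ≤ ((A s' j' : ℤ)) from h1)
    have h2' : B t (J-1) ≤ B t' j' := by
      exact_mod_cast (show ((B t (J-1) : ℤ)) ≤ ((B t' j' : ℤ)) from h2)
    -- s ≤ s'
    have hss' : s ≤ s' := by
      by_contra hcon
      push_neg at hcon
      have : A s' j' < A s (J-1) :=
        lt_of_le_of_lt (hA.row_le hs'r (by omega) (by omega)) (hA.col s' s (J-1) hcon hsr (by omega))
      omega
    have htt' : t ≤ t' := by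
      by_contra hcon
      push_neg at hcon
      have : B t' j' < B t (J-1) :=
        lt_of_le_of_lt (hB.row_le ht'r (by omega) (by omega)) (hB.col t' t (J-1) hcon htr (by omega))
      omega
    have hs : s' = s := by omega
    have ht : t' = t := by omega
    subst hs; subst ht
    have hjj : j' = J - 1 := by
      by_contra hcon
      have : A s' j' < A s' (J-1) := hA.row s' j' (J-1) hs'r (by omega) (by omega)
      omega
    subst hjj
    rfl

lemma colSet_subset_bandSet (hJ : 1 ≤ J) : colSet A B m (J - 1) ⊆ bandSet A B m J := by
  rintro p ⟨s, t, hst, rfl⟩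
  exact ⟨s, t, J - 1, by omega, hst, rfl⟩

lemma bandSet_diff (hA : GMono r c A) (hB : GMono r c B) (hm : 1 ≤ m) (hmr : m ≤ r)
    (hJ : 1 ≤ J) (hJc : J ≤ c) :
    bandSet A B m J \ colSet A B m (J - 1) = bandSet A B m (J - 1) := by
  ext p
  constructor
  · rintro ⟨⟨s, t, j, hj, hst, rfl⟩, hnot⟩
    refine ⟨s, t, j, ?_, hst, rfl⟩
    rcases eq_or_lt_of_le (Nat.le_sub_one_of_lt hj) with h | h
    · exact absurd ⟨s, t, hst, by rw [h]⟩ hnot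
    · exact h
  · rintro ⟨s, t, j, hj, hst, rfl⟩
    have hsr : s < r := by omega
    have htr : t < r := by omega
    refine ⟨⟨s, t, j, by omega, hst, rfl⟩, ?_⟩
    rintro ⟨s', t', hst', hp⟩
    rw [Prod.mk.injEq] at hp
    have hA1 : A s j = A s' (J-1) := by exact_mod_cast hp.1
    have hB1 : B t j = B t' (J-1) := by exact_mod_cast hp.2
    have hs'r : s' < r := by omega
    have ht'r : t' < r := by omega
    rcases le_or_gt s s' with h | h
    · have : A s j < A s' (J-1) :=
        lt_of_le_of_lt (hA.col_le h hs'r (by omega)) (hA.row s' j (J-1) hs'r hj (by omega))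
      omega
    · have : B t j < B t' (J-1) := by
        have ht : t < t' := by omega
        exact lt_of_lt_of_le (hB.col t t' j ht ht'r (by omega))
          (hB.row_le ht'r (by omega) (by omega))
      omega

lemma shadowRest_bandSet (hA : GMono r c A) (hB : GMono r c B) (hm : 1 ≤ m) (hmr : m ≤ r) :
    ∀ K, shadowRest dirSW (bandSet A B m c) K = bandSet A B m (c - K) := by
  intro K
  induction K with
  | zero => simp [shadowRest]
  | succ K ih =>
    rw [shadowRest, ih]
    rcases Nat.eq_zero_or_pos (c - K) with h | h
    · have h' : c - (K+1) = 0 := by omega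
      rw [h, h']
      have : bandSet A B m 0 = (∅ : Set (ℤ × ℤ)) := by
        ext p; simp [bandSet]
      rw [this]
      simp [minimalsUnder_empty]
    · rw [minimals_bandSet hA hB hm hmr h (by omega),
        bandSet_diff hA hB hm hmr h (by omega)]
      have hcc : c - (K+1) = c - K - 1 := by omega
      rw [hcc]

end Geometry
section Geometry2

variable {r c m J : ℕ} {A B : ℕ → ℕ → ℕ}

lemma mem_colSet_iff {p : ℤ × ℤ} (hm : 1 ≤ m) :
    p ∈ colSet A B m J ↔ ∃ s, s ≤ m - 1 ∧ p = ((A s J : ℤ), (B (m-1-s) J : ℤ)) := by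
  constructor
  · rintro ⟨s, t, hst, rfl⟩
    exact ⟨s, by omega, by rw [show m - 1 - s = t by omega]⟩
  · rintro ⟨s, hs, rfl⟩
    exact ⟨s, m - 1 - s, by omega, rfl⟩

lemma lineSkeleton_colSet (hA : GMono r c A) (hB : GMono r c B) (hm : 2 ≤ m) (hmr : m ≤ r)
    (hJ : J < c) :
    lineSkeleton dirSW (colSet A B m J) = colSet A B (m-1) J := by
  have hm1 : (1:ℕ) ≤ m := by omega
  -- membership of the pair-shadow set, in convenient form
  have hS2 : ∀ x : ℤ × ℤ,
      (∃ p ∈ colSet A B m J, ∃ q ∈ colSet A B m J, p ≠ q ∧ dirSW p x ∧ dirSW q x) ↔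
      (∃ a b, a < b ∧ b ≤ m - 1 ∧ x.1 ≤ (A a J : ℤ) ∧ x.2 ≤ (B (m-1-b) J : ℤ)) := by
    intro x
    constructor
    · rintro ⟨p, hp, q, hq, hne, hpx, hqx⟩
      rw [mem_colSet_iff hm1] at hp hq
      obtain ⟨u, hu, rfl⟩ := hp
      obtain ⟨v, hv, rfl⟩ := hq
      have huv : u ≠ v := by rintro rfl; exact hne rfl
      rcases lt_or_gt_of_ne huv with h | h
      · exact ⟨u, v, h, hv, hpx.1, hqx.2⟩
      · exact ⟨v, u, h, hu, hqx.1, hpx.2⟩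
    · rintro ⟨a, b, hab, hb, h1, h2⟩
      have har : a < r := by omega
      have ha1r : a + 1 ≤ m - 1 := by omega
      refine ⟨((A a J : ℤ), (B (m-1-a) J : ℤ)), (mem_colSet_iff hm1).2 ⟨a, by omega, rfl⟩,
        ((A (a+1) J : ℤ), (B (m-1-(a+1)) J : ℤ)), (mem_colSet_iff hm1).2 ⟨a+1, ha1r, rfl⟩,
        ?_, ⟨h1, ?_⟩, ⟨?_, ?_⟩⟩
      · intro hcon
        rw [Prod.mk.injEq] at hcon
        have := hcon.1
        have hlt : A a J < A (a+1) J := hA.col a (a+1) J (by omega) (by omega) hJ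
        simp only [Int.natCast_inj] at this
        omega
      · calc x.2 ≤ (B (m-1-b) J : ℤ) := h2
          _ ≤ (B (m-1-a) J : ℤ) := by
            exact_mod_cast hB.col_le (by omega) (by omega) hJ
      · calc x.1 ≤ (A a J : ℤ) := h1
          _ ≤ (A (a+1) J : ℤ) := by
            exact_mod_cast hA.col_le (by omega) (by omega) hJ
      · calc x.2 ≤ (B (m-1-b) J : ℤ) := h2
          _ ≤ (B (m-1-(a+1)) J : ℤ) := by
            exact_mod_cast hB.col_le (by omega) (by omega) hJ
  ext x
  constructor
  · rintro ⟨hxS, hmax⟩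
    rw [Set.mem_setOf_eq, hS2] at hxS
    obtain ⟨a, b, hab, hb, h1, h2⟩ := hxS
    set z : ℤ × ℤ := ((A a J : ℤ), (B (m-1-1-a) J : ℤ)) with hz
    have hzS : z ∈ {y | ∃ p ∈ colSet A B m J, ∃ q ∈ colSet A B m J, p ≠ q ∧ dirSW p y ∧ dirSW q y} := by
      rw [Set.mem_setOf_eq, hS2]
      exact ⟨a, a+1, by omega, by omega, le_rfl, by
        show (B (m-1-1-a) J : ℤ) ≤ (B (m-1-(a+1)) J : ℤ)
        rw [show m-1-(a+1) = m-1-1-a by omega]⟩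
    have hzx : dirSW z x := by
      constructor
      · exact h1
      · calc x.2 ≤ (B (m-1-b) J : ℤ) := h2
          _ ≤ (B (m-1-1-a) J : ℤ) := by
            exact_mod_cast hB.col_le (by omega) (by omega) hJ
    have := hmax z hzS hzx
    rw [← this]
    exact ⟨a, m-1-1-a, by omega, rfl⟩
  · rintro ⟨s, t, hst, rfl⟩
    have hsm : s ≤ m - 2 := by omega
    have htv : t = m - 1 - 1 - s := by omega
    constructor
    · rw [Set.mem_setOf_eq, hS2]
      exact ⟨s, s+1, by omega, by omega, le_rfl, by
        show (B t J : ℤ) ≤ (B (m-1-(s+1)) J : ℤ)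
        rw [show m-1-(s+1) = t by omega]⟩
    · rintro y hy ⟨hy1, hy2⟩
      rw [Set.mem_setOf_eq, hS2] at hy
      obtain ⟨a, b, hab, hb, h1, h2⟩ := hy
      have hsa : s ≤ a := by
        by_contra hcon
        push_neg at hcon
        have hlt : A a J < A s J := hA.col a s J hcon (by omega) hJ
        have : (A s J : ℤ) ≤ (A a J : ℤ) := le_trans hy1 h1
        simp only [Nat.cast_le] at this
        omega
      have hbs : b ≤ s + 1 := by
        by_contra hcon
        push_neg at hcon
        have hlt : B (m-1-b) J < B t J := by
          rw [htv]
          exact hB.col (m-1-b) (m-1-1-s) J (by omega) (by omega) hJ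
        have : (B t J : ℤ) ≤ (B (m-1-b) J : ℤ) := le_trans hy2 h2
        simp only [Nat.cast_le] at this
        omega
      have ha : a = s := by omega
      have hbb : b = s + 1 := by omega
      rw [ha] at h1
      rw [hbb] at h2
      have e1 : y.1 = (A s J : ℤ) := le_antisymm h1 hy1
      have e2 : y.2 = (B t J : ℤ) := by
        refine le_antisymm ?_ hy2
        calc y.2 ≤ (B (m-1-(s+1)) J : ℤ) := h2
          _ = (B t J : ℤ) := by rw [show m-1-(s+1) = t by omega]
      exact Prod.ext e1 e2

lemma skeleton_bandSet (hA : GMono r c A) (hB : GMono r c B) (hm : 2 ≤ m) (hmr : m ≤ r) :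
    skeleton dirSW (bandSet A B m c) = bandSet A B (m-1) c := by
  have hline : ∀ K : ℕ, shadowLine dirSW (bandSet A B m c) (K+1) =
      if 1 ≤ c - K then colSet A B m (c - K - 1) else ∅ := by
    intro K
    rw [shadowLine]
    simp only [Nat.add_sub_cancel]
    rw [shadowRest_bandSet hA hB (by omega) hmr]
    rcases Nat.eq_zero_or_pos (c - K) with h | h
    · rw [if_neg (show ¬ (1:ℕ) ≤ c - K by omega)]
      rw [h, show bandSet A B m 0 = (∅ : Set (ℤ×ℤ)) from by ext p; simp [bandSet]]
      exact minimalsUnder_empty _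
    · rw [if_pos (show (1:ℕ) ≤ c - K from h)]
      exact minimals_bandSet hA hB (by omega) hmr h (Nat.sub_le c K)
  ext x
  simp only [skeleton, Set.mem_iUnion]
  constructor
  · rintro ⟨K, hx⟩
    rw [hline K] at hx
    rcases Nat.eq_zero_or_pos (c - K) with h | h
    · rw [if_neg (show ¬ (1:ℕ) ≤ c - K by omega), lineSkeleton_empty] at hx
      exact absurd hx (Set.notMem_empty x)
    · rw [if_pos (show (1:ℕ) ≤ c - K from h), lineSkeleton_colSet hA hB hm hmr (by omega)] at hx
      obtain ⟨s, t, hst, rfl⟩ := hx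
      exact ⟨s, t, c - K - 1, by omega, hst, rfl⟩
  · rintro ⟨s, t, j, hj, hst, rfl⟩
    refine ⟨c - 1 - j, ?_⟩
    rw [hline (c-1-j)]
    have h1 : c - (c-1-j) = j + 1 := by omega
    rw [h1]
    simp only [if_pos (by omega : 1 ≤ j + 1)]
    rw [show j + 1 - 1 = j by omega]
    rw [lineSkeleton_colSet hA hB hm hmr hj]
    exact ⟨s, t, hst, rfl⟩

end Geometry2
section Dynamics

lemma find?_range_eq_some {p : ℕ → Bool} {N k : ℕ} (hk : k < N) (hp : p k = true)
    (hmin : ∀ j, j < k → p j = false) : (List.range N).find? p = some k := by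
  rw [List.find?_eq_some_iff_getElem]
  refine ⟨hp, k, by simpa using hk, by simp, ?_⟩
  intro j hj
  simp [hmin j hj]

lemma find?_range_eq_none {p : ℕ → Bool} {N : ℕ} (h : ∀ j, j < N → p j = false) :
    (List.range N).find? p = none := by
  rw [List.find?_eq_none]
  intro x hx
  rw [List.mem_range] at hx
  simp [h x hx]

/-- The 8-clause invariant describing `gromotion^x (stack r c P Q)`. -/
structure Inv (r c x : ℕ) (Q U : ℕ → ℕ → ℕ) (h : ℕ → ℕ) : Prop where
  anti : ∀ j, j + 1 < c → h (j+1) ≤ h j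
  hler : ∀ j, j < c → h j ≤ r
  hsum : (∑ j ∈ Finset.range c, (r - h j)) = x
  small : ∀ i j, j < c → i < h j → U i j ≤ r * c
  big : ∀ i j, j < c → h j ≤ i → i < r → U i j = r * c + Q (i - h j) j
  orig : ∀ i j, j < c → i < h j → U (r + i) j = r * c + Q (r - h j + i) j
  news : ∀ i j, j < c → h j ≤ i → i < r →
    r * c + r * c + 1 ≤ U (r + i) j ∧ U (r + i) j ≤ r * c + r * c + x
  mx : maxEntry (2 * r) c U = r * c + r * c + x

lemma Inv.anti_le {r c x : ℕ} {Q U : ℕ → ℕ → ℕ} {h : ℕ → ℕ} (H : Inv r c x Q U h)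
    {j j' : ℕ} (hj : j ≤ j') (hj' : j' < c) : h j' ≤ h j := by
  induction j' with
  | zero => have : j = 0 := by omega
            subst this; exact le_rfl
  | succ j' ih =>
    rcases Nat.eq_or_lt_of_le hj with he | hlt
    · rw [he]
    · exact le_trans (H.anti j' hj') (ih (by omega) (by omega))

lemma isSYT_gmono {r c : ℕ} {Q : ℕ → ℕ → ℕ} (hQ : IsSYT r c Q) : GMono r c Q := by
  constructor
  · intro s j j' hs hj hj'
    induction j' with
    | zero => omega
    | succ j' ih =>
      rcases Nat.lt_or_ge j j' with h | h
      · exact lt_trans (ih h (by omega)) (hQ.1 s j' hs hj')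
      · have : j = j' := by omega
        subst this
        exact hQ.1 s j hs hj'
  · intro s s' j hs hs' hj
    induction s' with
    | zero => omega
    | succ s' ih =>
      rcases Nat.lt_or_ge s s' with h | h
      · exact lt_trans (ih h (by omega)) (hQ.2.1 s' j hs' hj)
      · have : s = s' := by omega
        subst this
        exact hQ.2.1 s j hs' hj

lemma isSYT_mem {r c : ℕ} {Q : ℕ → ℕ → ℕ} (hQ : IsSYT r c Q) {i j : ℕ}
    (hi : i < r) (hj : j < c) : 1 ≤ Q i j ∧ Q i j ≤ r * c := by
  have := hQ.2.2.mapsTo (Set.mem_setOf_eq ▸ ⟨hi, hj⟩ : (i, j) ∈ {p : ℕ × ℕ | p.1 < r ∧ p.2 < c})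
  simpa [Set.mem_Icc] using this

lemma le_maxEntry {R C : ℕ} {U : ℕ → ℕ → ℕ} {i j : ℕ} (hi : i < R) (hj : j < C) :
    U i j ≤ maxEntry R C U := by
  unfold maxEntry
  exact Finset.le_sup (f := fun p : ℕ × ℕ => U p.1 p.2)
    (by simp [Finset.mem_product, hi, hj] : (i, j) ∈ (Finset.range R) ×ˢ (Finset.range C))

lemma maxEntry_le {R C v : ℕ} {U : ℕ → ℕ → ℕ} (h : ∀ i j, i < R → j < C → U i j ≤ v) :
    maxEntry R C U ≤ v := by
  unfold maxEntry
  refine Finset.sup_le ?_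
  rintro ⟨i, j⟩ hp
  simp only [Finset.mem_product, Finset.mem_range] at hp
  exact h i j hp.1 hp.2

/-- single step of the sliding path -/
lemma slidePath_succ (R C : ℕ) (T : ℕ → ℕ → ℕ) (k : ℕ) :
    slidePath R C T (k+1) = nextCell R C T (slidePath R C T k) := rfl

lemma nextCell_cases (R C : ℕ) (T : ℕ → ℕ → ℕ) (p : ℕ × ℕ) :
    nextCell R C T p = (p.1, p.2 + 1) ∨ nextCell R C T p = (p.1 + 1, p.2) := by
  unfold nextCell
  split <;> simp

lemma slidePath_sum (R C : ℕ) (T : ℕ → ℕ → ℕ) (k : ℕ) :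
    (slidePath R C T k).1 + (slidePath R C T k).2 = k := by
  induction k with
  | zero => rfl
  | succ k ih =>
    rw [slidePath_succ]
    rcases nextCell_cases R C T (slidePath R C T k) with h | h <;> rw [h] <;> simp <;> omega

lemma slidePath_fst_mono (R C : ℕ) (T : ℕ → ℕ → ℕ) {k k' : ℕ} (h : k ≤ k') :
    (slidePath R C T k).1 ≤ (slidePath R C T k').1 := by
  induction k' with
  | zero => have : k = 0 := by omega
            subst this; exact le_rfl
  | succ k' ih =>
    rcases Nat.eq_or_lt_of_le h with he | hlt
    · rw [he]
    · refine le_trans (ih (by omega)) ?_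
      rw [slidePath_succ]
      rcases nextCell_cases R C T (slidePath R C T k') with h' | h' <;> rw [h'] <;> simp

lemma slidePath_fst_succ_le (R C : ℕ) (T : ℕ → ℕ → ℕ) (k : ℕ) :
    (slidePath R C T (k+1)).1 ≤ (slidePath R C T k).1 + 1 := by
  rw [slidePath_succ]
  rcases nextCell_cases R C T (slidePath R C T k) with h' | h' <;> rw [h'] <;> simp

/-- ext at an in-grid cell -/
lemma ext_in {R C : ℕ} {T : ℕ → ℕ → ℕ} {p : ℕ × ℕ} (h1 : p.1 < R) (h2 : p.2 < C) :
    ext R C T p = ((T p.1 p.2 : ℕ) : WithTop ℕ) := if_pos ⟨h1, h2⟩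

lemma ext_out {R C : ℕ} {T : ℕ → ℕ → ℕ} {p : ℕ × ℕ} (h : ¬ (p.1 < R ∧ p.2 < C)) :
    ext R C T p = ⊤ := if_neg h

end Dynamics
section Dynamics2

variable {r c x : ℕ} {Q U : ℕ → ℕ → ℕ} {h : ℕ → ℕ}

lemma Inv.bigOrig (H : Inv r c x Q U h) :
    ∀ i j, j < c → h j ≤ i → i < r + h j → U i j = r * c + Q (i - h j) j := by
  intro i j hj h1 h2
  rcases Nat.lt_or_ge i r with hir | hir
  · exact H.big i j hj h1 hir
  · have hle := H.hler j hj
    have hi' : i - r < h j := by omega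
    have heq := H.orig (i - r) j hj hi'
    rw [show r + (i - r) = i by omega] at heq
    rw [heq, show r - h j + (i - r) = i - h j by omega]

lemma Inv.newsVal (H : Inv r c x Q U h) :
    ∀ i j, j < c → r + h j ≤ i → i < 2*r →
      r * c + r * c + 1 ≤ U i j ∧ U i j ≤ r * c + r * c + x := by
  intro i j hj h1 h2
  have heq := H.news (i - r) j hj (by omega) (by omega)
  rwa [show r + (i - r) = i by omega] at heq

lemma Inv.notSmall (hQ : IsSYT r c Q) (H : Inv r c x Q U h) :
    ∀ i j, j < c → h j ≤ i → i < 2*r → r * c + 1 ≤ U i j := by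
  intro i j hj h1 h2
  rcases Nat.lt_or_ge i (r + h j) with hlt | hge
  · rw [H.bigOrig i j hj h1 hlt]
    have := (isSYT_mem hQ (show i - h j < r by omega) hj).1
    omega
  · have := (H.newsVal i j hj hge h2).1
    omega

lemma Inv.h0pos (hr : 0 < r) (hc : 0 < c) (hx : x < r * c) (H : Inv r c x Q U h) :
    1 ≤ h 0 := by
  by_contra hcon
  push_neg at hcon
  have h0 : h 0 = 0 := by omega
  have hall : ∀ j, j < c → h j = 0 := fun j hj =>
    Nat.le_zero.mp (h0 ▸ H.anti_le (Nat.zero_le j) hj)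
  have : (∑ j ∈ Finset.range c, (r - h j)) = c * r := by
    rw [Finset.sum_congr rfl (fun j hj => by
      rw [hall j (Finset.mem_range.mp hj)])]
    simp [Finset.sum_const, mul_comm]
  rw [H.hsum] at this
  have := Nat.mul_comm r c
  omega

lemma nextCell_east_cond {R C : ℕ} {U : ℕ → ℕ → ℕ} {p : ℕ × ℕ}
    (hcond : ext R C U (p.1, p.2 + 1) < ext R C U (p.1 + 1, p.2)) :
    nextCell R C U p = (p.1, p.2 + 1) := if_pos hcond

lemma nextCell_south_cond {R C : ℕ} {U : ℕ → ℕ → ℕ} {p : ℕ × ℕ}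
    (hcond : ¬ ext R C U (p.1, p.2 + 1) < ext R C U (p.1 + 1, p.2)) :
    nextCell R C U p = (p.1 + 1, p.2) := if_neg hcond

lemma nextCell_eq_east {R C : ℕ} {U : ℕ → ℕ → ℕ} {p : ℕ × ℕ}
    (hne : nextCell R C U p = (p.1, p.2 + 1)) :
    ext R C U (p.1, p.2 + 1) < ext R C U (p.1 + 1, p.2) := by
  by_contra hcon
  rw [nextCell_south_cond hcon] at hne
  have := congrArg Prod.fst hne
  simp at this

lemma nextCell_eq_south {R C : ℕ} {U : ℕ → ℕ → ℕ} {p : ℕ × ℕ}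
    (hne : nextCell R C U p = (p.1 + 1, p.2)) :
    ¬ ext R C U (p.1, p.2 + 1) < ext R C U (p.1 + 1, p.2) := by
  intro hcon
  rw [nextCell_east_cond hcon] at hne
  have := congrArg Prod.fst hne
  simp at this

/-- The slide path exits the region of small values by moving south out of an outer corner. -/
lemma slide_exit (hr : 0 < r) (hc : 0 < c) (hQ : IsSYT r c Q) (hx : x < r * c)
    (H : Inv r c x Q U h) :
    ∃ e i0 j0 : ℕ, 0 < e ∧
      (∀ k, k < e → (slidePath (2*r) c U k).2 < c ∧
        (slidePath (2*r) c U k).1 < h (slidePath (2*r) c U k).2) ∧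
      slidePath (2*r) c U (e-1) = (i0, j0) ∧
      slidePath (2*r) c U e = (i0+1, j0) ∧
      h j0 = i0 + 1 ∧ j0 < c ∧ (j0 + 1 < c → h (j0+1) ≤ i0) := by
  classical
  have hgm := isSYT_gmono hQ
  have hex : ∃ k, ¬ ((slidePath (2*r) c U k).2 < c ∧
      (slidePath (2*r) c U k).1 < h (slidePath (2*r) c U k).2) := by
    refine ⟨2*r + c, ?_⟩
    rintro ⟨h1, h2⟩
    have hs := slidePath_sum (2*r) c U (2*r+c)
    have := H.hler (slidePath (2*r) c U (2*r+c)).2 h1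
    omega
  obtain ⟨e, he_not, hphase1⟩ : ∃ e, (¬ ((slidePath (2*r) c U e).2 < c ∧
      (slidePath (2*r) c U e).1 < h (slidePath (2*r) c U e).2)) ∧
      ∀ k, k < e → (slidePath (2*r) c U k).2 < c ∧
        (slidePath (2*r) c U k).1 < h (slidePath (2*r) c U k).2 :=
    ⟨Nat.find hex, Nat.find_spec hex, fun k hk => of_not_not (Nat.find_min hex hk)⟩
  have hepos : 0 < e := by
    rcases Nat.eq_zero_or_pos e with h0 | h0
    · exfalso
      apply he_not
      rw [h0]
      exact ⟨hc, H.h0pos hr hc hx⟩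
    · exact h0
  rcases hp1 : slidePath (2*r) c U (e-1) with ⟨i0, j0⟩
  obtain ⟨hj0c, hreg⟩ := hphase1 (e-1) (by omega)
  rw [hp1] at hj0c hreg
  dsimp only at hj0c hreg
  have hee : slidePath (2*r) c U e = nextCell (2*r) c U (slidePath (2*r) c U (e-1)) := by
    rw [show e = (e-1)+1 by omega]
    rfl
  rw [hp1] at hee
  have hler0 := H.hler j0 hj0c
  have hi0r : i0 < r := by omega
  have hsouthmove : slidePath (2*r) c U e = (i0 + 1, j0) ∧ h j0 = i0 + 1 := by
    rcases nextCell_cases (2*r) c U (i0, j0) with hE | hS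
    · -- east move: derive a contradiction
      exfalso
      have hcond := nextCell_eq_east hE
      dsimp only at hE hcond
      have hnotE : ¬ (j0 + 1 < c ∧ i0 < h (j0+1)) := by
        have := he_not
        rw [hee, hE] at this
        simpa using this
      by_cases hjc : j0 + 1 < c
      · have hieast : h (j0+1) ≤ i0 := by
          rcases Nat.lt_or_ge i0 (h (j0+1)) with hlt | hge
          · exact absurd ⟨hjc, hlt⟩ hnotE
          · exact hge
        rw [ext_in (p := (i0, j0+1)) (show i0 < 2*r by omega) (show j0+1 < c from hjc),
          ext_in (p := (i0+1, j0)) (show i0+1 < 2*r by omega) (show j0 < c from hj0c)]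
          at hcond
        dsimp only at hcond
        have hlt : U i0 (j0+1) < U (i0+1) j0 := by exact_mod_cast hcond
        by_cases hsr : i0 + 1 < h j0
        · have hsv := H.small (i0+1) j0 hj0c hsr
          have hev := H.notSmall hQ i0 (j0+1) hjc hieast (by omega)
          omega
        · have hij : h j0 = i0 + 1 := by omega
          have hsval : U (i0+1) j0 = r*c + Q 0 j0 := by
            have := H.bigOrig (i0+1) j0 hj0c (by omega) (by omega)
            rwa [show i0 + 1 - h j0 = 0 by omega] at this
          have heval : U i0 (j0+1) = r*c + Q (i0 - h (j0+1)) (j0+1) :=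
            H.bigOrig i0 (j0+1) hjc hieast (by omega)
          rw [hsval, heval] at hlt
          have h1 : Q 0 j0 < Q 0 (j0+1) := hgm.row 0 j0 (j0+1) hr (by omega) hjc
          have h2 : Q 0 (j0+1) ≤ Q (i0 - h (j0+1)) (j0+1) :=
            hgm.col_le (Nat.zero_le _) (by omega) hjc
          omega
      · rw [ext_out (p := (i0, j0+1)) (by dsimp only; omega)] at hcond
        exact not_top_lt hcond
    · -- south move
      dsimp only at hS
      refine ⟨by rw [hee, hS], ?_⟩
      have hnotS : ¬ (j0 < c ∧ i0 + 1 < h j0) := by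
        have := he_not
        rw [hee, hS] at this
        simpa using this
      have : ¬ (i0 + 1 < h j0) := fun hcon => hnotS ⟨hj0c, hcon⟩
      omega
  have heast : j0 + 1 < c → h (j0+1) ≤ i0 := by
    intro hjc
    by_contra hcon
    push_neg at hcon
    have henx : nextCell (2*r) c U (i0, j0) = (i0 + 1, j0) := by
      rw [← hee]
      exact hsouthmove.1
    have hcond := nextCell_eq_south (p := (i0, j0)) (by dsimp only; exact henx)
    apply hcond
    dsimp only
    rw [ext_in (p := (i0, j0+1)) (show i0 < 2*r by omega) (show j0+1 < c from hjc),
      ext_in (p := (i0+1, j0)) (show i0+1 < 2*r by omega) (show j0 < c from hj0c)]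
    dsimp only
    have hev := H.small i0 (j0+1) hjc hcon
    have hsv := H.notSmall hQ (i0+1) j0 hj0c (by omega) (by omega)
    exact_mod_cast (show U i0 (j0+1) < U (i0+1) j0 by omega)
  exact ⟨e, i0, j0, hepos, hphase1, hp1, hsouthmove.1, hsouthmove.2, hj0c, heast⟩


end Dynamics2
section Dynamics3

variable {r c x : ℕ} {Q U : ℕ → ℕ → ℕ} {h : ℕ → ℕ}

lemma nextCell_grid {R C : ℕ} {U : ℕ → ℕ → ℕ} {p : ℕ × ℕ} (hR : 0 < R) (hC : 0 < C)
    (hi : p.1 < R) (hj : p.2 < C) (hnc : ¬(p.1 = R-1 ∧ p.2 = C-1)) :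
    (nextCell R C U p = (p.1, p.2+1) ∧ p.2+1 < C) ∨
    (nextCell R C U p = (p.1+1, p.2) ∧ p.1+1 < R) := by
  by_cases hec : p.2 + 1 < C
  · by_cases hsc : p.1 + 1 < R
    · rcases nextCell_cases R C U p with hcase | hcase
      · exact Or.inl ⟨hcase, hec⟩
      · exact Or.inr ⟨hcase, hsc⟩
    · -- south is out of the grid, east is in: the path moves east
      left
      refine ⟨nextCell_east_cond ?_, hec⟩
      rw [ext_in (p := (p.1, p.2+1)) (by dsimp only; omega) (by dsimp only; omega),
        ext_out (p := (p.1+1, p.2)) (by dsimp only; omega)]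
      exact WithTop.coe_lt_top _
  · -- east is out of the grid: the path moves south, which must be in the grid
    right
    have hsc : p.1 + 1 < R := by omega
    refine ⟨nextCell_south_cond ?_, hsc⟩
    rw [ext_out (p := (p.1, p.2+1)) (by dsimp only; omega)]
    exact not_top_lt

/-- The path descends straight down column `j0` through the big values. -/
lemma slide_descent (hr : 0 < r) (hc : 0 < c) (hQ : IsSYT r c Q)
    (H : Inv r c x Q U h) {e i0 j0 : ℕ} (hepos : 0 < e)
    (hp1 : slidePath (2*r) c U (e-1) = (i0, j0))
    (hee : slidePath (2*r) c U e = (i0+1, j0))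
    (hh0 : h j0 = i0 + 1) (hj0c : j0 < c) (heast : j0 + 1 < c → h (j0+1) ≤ i0) :
    ∀ d, d ≤ r → slidePath (2*r) c U (e-1+d) = (i0+d, j0) := by
  have hgm := isSYT_gmono hQ
  have hler0 := H.hler j0 hj0c
  intro d
  induction d with
  | zero => intro _; simpa using hp1
  | succ d ih =>
    intro hdr
    rcases Nat.eq_zero_or_pos d with hd0 | hdpos
    · subst hd0
      rw [show e - 1 + (0+1) = e by omega]
      simpa using hee
    · have hcur := ih (by omega)
      have hnext : slidePath (2*r) c U (e-1+(d+1)) =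
          nextCell (2*r) c U (slidePath (2*r) c U (e-1+d)) := by
        rw [show e-1+(d+1) = (e-1+d)+1 by omega]
        rfl
      rw [hnext, hcur]
      have hsval : U (i0+d+1) j0 = r*c + Q d j0 := by
        have := H.bigOrig (i0+d+1) j0 hj0c (by omega) (by omega)
        rwa [show i0+d+1 - h j0 = d by omega] at this
      have hsgrid : i0 + d + 1 < 2*r := by omega
      refine nextCell_south_cond ?_
      dsimp only
      by_cases hjc : j0 + 1 < c
      · have hie : h (j0+1) ≤ i0 := heast hjc
        have hegrid : i0 + d < 2*r := by omega
        rw [ext_in (p := (i0+d, j0+1)) (by dsimp only; omega) (by dsimp only; omega),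
          ext_in (p := (i0+d+1, j0)) (by dsimp only; omega) (by dsimp only; omega)]
        dsimp only
        rw [not_lt]
        by_cases hnews : r + h (j0+1) ≤ i0 + d
        · have hev := (H.newsVal (i0+d) (j0+1) hjc hnews hegrid).1
          have hub := (isSYT_mem hQ (show d < r by omega) hj0c).2
          exact_mod_cast (show U (i0+d+1) j0 ≤ U (i0+d) (j0+1) by omega)
        · push_neg at hnews
          have heval : U (i0+d) (j0+1) = r*c + Q (i0+d - h (j0+1)) (j0+1) :=
            H.bigOrig (i0+d) (j0+1) hjc (by omega) hnews
          have h1 : Q d j0 < Q d (j0+1) := hgm.row d j0 (j0+1) (by omega) (by omega) hjc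
          have h2 : Q d (j0+1) ≤ Q (i0+d - h (j0+1)) (j0+1) :=
            hgm.col_le (by omega) (by omega) hjc
          rw [hsval, heval]
          exact_mod_cast (show r*c + Q d j0 ≤ r*c + Q (i0+d-h (j0+1)) (j0+1) by omega)
      · rw [ext_out (p := (i0+d, j0+1)) (by dsimp only; omega)]
        exact not_top_lt

/-- After the descent the path stays in the region of new (large) values. -/
lemma slide_news (hr : 0 < r) (hc : 0 < c) (hQ : IsSYT r c Q)
    (H : Inv r c x Q U h) {e i0 j0 : ℕ} (hepos : 0 < e)
    (hp1 : slidePath (2*r) c U (e-1) = (i0, j0))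
    (hh0 : h j0 = i0 + 1) (hj0c : j0 < c) (heast : j0 + 1 < c → h (j0+1) ≤ i0)
    (hdesc : ∀ d, d ≤ r → slidePath (2*r) c U (e-1+d) = (i0+d, j0)) :
    ∀ d, e-1+r+d < 2*r+c-2 →
      ((slidePath (2*r) c U (e-1+r+d+1)).2 < c ∧
       r + h (slidePath (2*r) c U (e-1+r+d+1)).2 ≤ (slidePath (2*r) c U (e-1+r+d+1)).1 ∧
       (slidePath (2*r) c U (e-1+r+d+1)).1 < 2*r) := by
  have hler0 := H.hler j0 hj0c
  have hi0r : i0 + 1 ≤ r := by omega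
  have hsum1 : i0 + j0 = e - 1 := by
    have := slidePath_sum (2*r) c U (e-1)
    rw [hp1] at this
    simpa using this
  intro d
  induction d with
  | zero =>
    intro hlt
    have hpe := hdesc r le_rfl
    have hnext : slidePath (2*r) c U (e-1+r+0+1) =
        nextCell (2*r) c U (slidePath (2*r) c U (e-1+r)) := by
      rw [show e-1+r+0+1 = (e-1+r)+1 by omega]
      rfl
    rw [hnext, hpe]
    have hnc : ¬ ((i0+r : ℕ) = 2*r-1 ∧ j0 = c-1) := by
      rintro ⟨ha, hb⟩
      omega
    rcases nextCell_grid (by omega : 0 < 2*r) hc (p := (i0+r, j0))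
        (by dsimp only; omega) (by dsimp only; exact hj0c) (by dsimp only; exact hnc)
        (U := U) with ⟨hcase, hgrid⟩ | ⟨hcase, hgrid⟩
    · rw [hcase]
      dsimp only at hgrid ⊢
      exact ⟨hgrid, by have := heast hgrid; omega, by omega⟩
    · rw [hcase]
      dsimp only at hgrid ⊢
      exact ⟨hj0c, by omega, hgrid⟩
  | succ d ih =>
    intro hlt
    obtain ⟨hq2, hq1, hq3⟩ := ih (by omega)
    have hnext : slidePath (2*r) c U (e-1+r+(d+1)+1) =
        nextCell (2*r) c U (slidePath (2*r) c U (e-1+r+d+1)) := by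
      rw [show e-1+r+(d+1)+1 = (e-1+r+d+1)+1 by omega]
      rfl
    have hsum2 := slidePath_sum (2*r) c U (e-1+r+d+1)
    have hnc : ¬ ((slidePath (2*r) c U (e-1+r+d+1)).1 = 2*r-1 ∧
        (slidePath (2*r) c U (e-1+r+d+1)).2 = c-1) := by
      rintro ⟨ha, hb⟩
      omega
    rw [hnext]
    rcases nextCell_grid (by omega : 0 < 2*r) hc
        (p := slidePath (2*r) c U (e-1+r+d+1)) hq3 hq2 hnc (U := U)
        with ⟨hcase, hgrid⟩ | ⟨hcase, hgrid⟩
    · rw [hcase]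
      dsimp only
      refine ⟨hgrid, ?_, hq3⟩
      have := H.anti (slidePath (2*r) c U (e-1+r+d+1)).2 hgrid
      omega
    · rw [hcase]
      dsimp only
      exact ⟨hq2, by omega, hgrid⟩

end Dynamics3
section Dynamics4

variable {r c x : ℕ} {Q U : ℕ → ℕ → ℕ} {h : ℕ → ℕ}

/-- Bundled data of one slide analysis. -/
structure SlideData (r c : ℕ) (Q U : ℕ → ℕ → ℕ) (h : ℕ → ℕ) (e i0 j0 : ℕ) : Prop where
  epos : 0 < e
  phase1 : ∀ k, k < e → (slidePath (2*r) c U k).2 < c ∧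
    (slidePath (2*r) c U k).1 < h (slidePath (2*r) c U k).2
  p1 : slidePath (2*r) c U (e-1) = (i0, j0)
  hh0 : h j0 = i0 + 1
  j0c : j0 < c
  east : j0 + 1 < c → h (j0+1) ≤ i0
  desc : ∀ d, d ≤ r → slidePath (2*r) c U (e-1+d) = (i0+d, j0)
  news : ∀ d, e-1+r+d < 2*r+c-2 →
      ((slidePath (2*r) c U (e-1+r+d+1)).2 < c ∧
       r + h (slidePath (2*r) c U (e-1+r+d+1)).2 ≤ (slidePath (2*r) c U (e-1+r+d+1)).1 ∧
       (slidePath (2*r) c U (e-1+r+d+1)).1 < 2*r)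

lemma slide_data (hr : 0 < r) (hc : 0 < c) (hQ : IsSYT r c Q) (hx : x < r * c)
    (H : Inv r c x Q U h) : ∃ e i0 j0, SlideData r c Q U h e i0 j0 := by
  obtain ⟨e, i0, j0, hepos, hphase1, hp1, hee, hh0, hj0c, heast⟩ :=
    slide_exit hr hc hQ hx H
  have hdesc := slide_descent hr hc hQ H hepos hp1 hee hh0 hj0c heast
  have hnews := slide_news hr hc hQ H hepos hp1 hh0 hj0c heast hdesc
  exact ⟨e, i0, j0, ⟨hepos, hphase1, hp1, hh0, hj0c, heast, hdesc, hnews⟩⟩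

namespace SlideData

variable {e i0 j0 : ℕ}

lemma sum1 (S : SlideData r c Q U h e i0 j0) : i0 + j0 = e - 1 := by
  have := slidePath_sum (2*r) c U (e-1)
  rw [S.p1] at this
  simpa using this

lemma i0r (S : SlideData r c Q U h e i0 j0) (H : Inv r c x Q U h) : i0 + 1 ≤ r := S.hh0 ▸ H.hler j0 S.j0c

/-- every path cell up to the final corner lies in the grid -/
lemma grid (S : SlideData r c Q U h e i0 j0) (hr : 0 < r) (hc : 0 < c) (H : Inv r c x Q U h) :
    ∀ k, k ≤ 2*r+c-2 → (slidePath (2*r) c U k).1 < 2*r ∧ (slidePath (2*r) c U k).2 < c := by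
  intro k hk
  have hi0r := S.i0r H
  have hsum1 := S.sum1
  rcases Nat.lt_or_ge k e with hke | hke
  · obtain ⟨h1, h2⟩ := S.phase1 k hke
    have := H.hler _ h1
    exact ⟨by omega, h1⟩
  · rcases le_or_gt k (e-1+r) with hkr | hkr
    · have hd := S.desc (k - (e-1)) (by omega)
      rw [show e-1+(k-(e-1)) = k by omega] at hd
      rw [hd]
      exact ⟨by dsimp only; omega, by dsimp only; exact S.j0c⟩
    · have hn := S.news (k - (e-1+r) - 1) (by omega)
      rw [show e-1+r+(k-(e-1+r)-1)+1 = k by omega] at hn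
      exact ⟨hn.2.2, hn.1⟩

lemma corner (S : SlideData r c Q U h e i0 j0) (hr : 0 < r) (hc : 0 < c) (H : Inv r c x Q U h) :
    slidePath (2*r) c U (2*r+c-2) = (2*r-1, c-1) := by
  obtain ⟨h1, h2⟩ := S.grid hr hc H (2*r+c-2) le_rfl
  have hs := slidePath_sum (2*r) c U (2*r+c-2)
  have e1 : (slidePath (2*r) c U (2*r+c-2)).1 = 2*r-1 := by omega
  have e2 : (slidePath (2*r) c U (2*r+c-2)).2 = c-1 := by omega
  rw [← e1, ← e2]

/-- the value of `slideInto` in each row `1 ≤ m ≤ r` -/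
lemma slideInto_eq (S : SlideData r c Q U h e i0 j0) (hr : 0 < r) (hc : 0 < c) (hQ : IsSYT r c Q) (H : Inv r c x Q U h) :
    ∀ m, 1 ≤ m → m ≤ r →
      (h j0 ≤ m → slideInto (2*r) c U m = r*c + Q (m - h j0) j0) ∧
      (m < h j0 → slideInto (2*r) c U m ≤ r*c) := by
  intro m hm1 hmr
  have hi0r := S.i0r H
  have hh0 := S.hh0
  have hler0 := H.hler j0 S.j0c
  constructor
  · -- big case: first path cell in row m is (m, j0)
    intro hhm
    have hd := S.desc (m - i0) (by omega)
    have hrow : (slidePath (2*r) c U (e-1+(m-i0))).1 = m := by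
      rw [hd]; dsimp only; omega
    have hbefore : ∀ k', k' < e-1+(m-i0) → (slidePath (2*r) c U k').1 < m := by
      intro k' hk'
      rcases Nat.lt_or_ge k' e with hke | hke
      · have := (S.phase1 k' hke).2
        have hle : (slidePath (2*r) c U k').1 ≤ (slidePath (2*r) c U (e-1)).1 :=
          slidePath_fst_mono (2*r) c U (by omega)
        rw [S.p1] at hle
        dsimp only at hle
        omega
      · have hd' := S.desc (k' - (e-1)) (by omega)
        rw [show e-1+(k'-(e-1)) = k' by omega] at hd'
        rw [hd']
        dsimp only
        omega
    have hsum1 := S.sum1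
    have hj0c := S.j0c
    have hkN : e-1+(m-i0) < 2*r+c-1 := by omega
    rw [slideInto]
    rw [find?_range_eq_some (k := e-1+(m-i0)) hkN
      (by simp [hrow])
      (fun k' hk' => by simp [Nat.ne_of_lt (hbefore k' hk')])]
    show U (slidePath (2*r) c U (e-1+(m-i0))).1 (slidePath (2*r) c U (e-1+(m-i0))).2
      = r * c + Q (m - h j0) j0
    rw [hd]
    dsimp only
    rw [show i0 + (m - i0) = m by omega]
    have := H.bigOrig m j0 hj0c (by omega) (by omega)
    rw [this]
  · -- small case: first path cell in row m lies in the small region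
    intro hhm
    -- there is a path cell in row m within phase 1
    have hex : ∃ k, (slidePath (2*r) c U k).1 = m ∧ k ≤ e - 1 := by
      -- rows increase by at most one, row (e-1) = i0 ≥ m
      have hrow : (slidePath (2*r) c U (e-1)).1 = i0 := by rw [S.p1]
      have hfind : ∃ k, m ≤ (slidePath (2*r) c U k).1 := ⟨e-1, by omega⟩
      classical
      have hspec := Nat.find_spec hfind
      have hmin := fun k' (hk' : k' < Nat.find hfind) => Nat.find_min hfind hk'
      refine ⟨Nat.find hfind, ?_, ?_⟩
      · rcases Nat.eq_zero_or_pos (Nat.find hfind) with h0 | h0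
        · rw [h0] at hspec ⊢
          have : slidePath (2*r) c U 0 = (0,0) := rfl
          rw [this] at hspec ⊢
          dsimp only at hspec ⊢
          omega
        · have hm' := hmin (Nat.find hfind - 1) (by omega)
          push_neg at hm'
          have hstep := slidePath_fst_succ_le (2*r) c U (Nat.find hfind - 1)
          rw [show Nat.find hfind - 1 + 1 = Nat.find hfind by omega] at hstep
          omega
      · by_contra hcon
        push_neg at hcon
        have := hmin (e-1) hcon
        omega
    obtain ⟨k0', hk0row, hk0le⟩ := hex
    -- take the first one
    have hfind2 : ∃ k, (slidePath (2*r) c U k).1 = m := ⟨k0', hk0row⟩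
    classical
    have hspec2 := Nat.find_spec hfind2
    have hmin2 := fun k' (hk' : k' < Nat.find hfind2) => Nat.find_min hfind2 hk'
    have hk0 : Nat.find hfind2 ≤ k0' := Nat.find_min' hfind2 hk0row
    have hsum1 := S.sum1
    have hj0c := S.j0c
    have hkN : Nat.find hfind2 < 2*r+c-1 := by omega
    rw [slideInto]
    rw [find?_range_eq_some (k := Nat.find hfind2) hkN
      (by simp [hspec2])
      (fun k' hk' => by simp [hmin2 k' hk'])]
    show U (slidePath (2*r) c U (Nat.find hfind2)).1
      (slidePath (2*r) c U (Nat.find hfind2)).2 ≤ r * c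
    have hreg := S.phase1 (Nat.find hfind2) (by omega)
    exact H.small _ _ hreg.1 hreg.2

end SlideData

end Dynamics4
section Dynamics5

variable {r c x : ℕ} {Q U : ℕ → ℕ → ℕ} {h : ℕ → ℕ}

lemma gromotion_on {i j : ℕ} (hnc : ¬(i = 2*r-1 ∧ j = c-1)) (hij : i + j < 2*r+c-2)
    (hpc : slidePath (2*r) c U (i+j) = (i,j)) :
    gromotion (2*r) c U i j =
      U (slidePath (2*r) c U (i+j+1)).1 (slidePath (2*r) c U (i+j+1)).2 := by
  unfold gromotion
  rw [if_neg hnc]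
  rw [find?_range_eq_some (k := i+j) hij (by simp [hpc]) (fun k' hk' => by
    simp only [decide_eq_false_iff_not]
    intro hcon
    have := slidePath_sum (2*r) c U k'
    rw [hcon] at this
    dsimp only at this
    omega)]

lemma gromotion_off {i j : ℕ} (hnc : ¬(i = 2*r-1 ∧ j = c-1))
    (hpc : slidePath (2*r) c U (i+j) ≠ (i,j)) :
    gromotion (2*r) c U i j = U i j := by
  unfold gromotion
  rw [if_neg hnc]
  rw [find?_range_eq_none (fun k' hk' => by
    simp only [decide_eq_false_iff_not]
    intro hcon
    have := slidePath_sum (2*r) c U k'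
    rw [hcon] at this
    dsimp only at this
    exact hpc (by rw [← hcon, show k' = i + j by omega]))]

lemma gromotion_corner : gromotion (2*r) c U (2*r-1) (c-1) = maxEntry (2*r) c U + 1 := by
  unfold gromotion
  rw [if_pos ⟨rfl, rfl⟩]

namespace SlideData

variable {e i0 j0 : ℕ}

lemma PH (S : SlideData r c Q U h e i0 j0) :
    ∀ k, e-1 ≤ k → k ≤ e-1+r → slidePath (2*r) c U k = (i0 + (k-(e-1)), j0) := by
  intro k h1 h2
  have := S.desc (k-(e-1)) (by omega)
  rwa [show e-1+(k-(e-1)) = k by omega] at this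

lemma PN (S : SlideData r c Q U h e i0 j0) :
    ∀ k, e-1+r < k → k ≤ 2*r+c-2 →
      ((slidePath (2*r) c U k).2 < c ∧
       r + h (slidePath (2*r) c U k).2 ≤ (slidePath (2*r) c U k).1 ∧
       (slidePath (2*r) c U k).1 < 2*r) := by
  intro k h1 h2
  have := S.news (k-(e-1+r)-1) (by omega)
  rwa [show e-1+r+(k-(e-1+r)-1)+1 = k by omega] at this

/-- The main invariant step: one gromotion preserves the invariant with the height
of column `j0` decreased by one. -/
lemma inv_step (S : SlideData r c Q U h e i0 j0) (hr : 0 < r) (hc : 0 < c)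
    (hQ : IsSYT r c Q) (hx : x < r * c) (H : Inv r c x Q U h) :
    Inv r c (x+1) Q (gromotion (2*r) c U) (Function.update h j0 i0) := by
  have hsum1 := S.sum1
  have hi0r := S.i0r H
  have hh0 := S.hh0
  have hj0c := S.j0c
  have hgm := isSYT_gmono hQ
  -- a cell of the grid which is on the path and is not the corner has i+j < 2r+c-2
  have hkbound : ∀ i j : ℕ, i < 2*r → j < c → ¬(i = 2*r-1 ∧ j = c-1) → i + j < 2*r+c-2 := by
    intro i j h1 h2 h3
    rcases Nat.lt_or_ge (i+j) (2*r+c-2) with hlt | hge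
    · exact hlt
    · exfalso; exact h3 ⟨by omega, by omega⟩
  constructor
  -- anti
  · intro j hj
    by_cases h1 : j = j0
    · subst h1
      rw [Function.update_self, Function.update_of_ne (by omega)]
      exact le_trans (S.east hj) le_rfl
    · by_cases h2 : j + 1 = j0
      · rw [Function.update_of_ne h1, h2, Function.update_self]
        have := H.anti j hj
        rw [h2] at this
        omega
      · rw [Function.update_of_ne h1, Function.update_of_ne h2]
        exact H.anti j hj
  -- hler
  · intro j hj
    by_cases h1 : j = j0
    · subst h1; rw [Function.update_self]; omega
    · rw [Function.update_of_ne h1]; exact H.hler j hj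
  -- hsum
  · have hrw : ∀ j ∈ Finset.range c, r - Function.update h j0 i0 j =
        Function.update (fun j => r - h j) j0 (r - i0) j := by
      intro j _
      by_cases h1 : j = j0
      · subst h1; rw [Function.update_self, Function.update_self]
      · rw [Function.update_of_ne h1, Function.update_of_ne h1]
    rw [Finset.sum_congr rfl hrw, Finset.sum_update_of_mem (Finset.mem_range.mpr hj0c)]
    have hold := H.hsum
    rw [Finset.sum_eq_sum_sdiff_singleton_add (Finset.mem_range.mpr hj0c)
      (fun j => r - h j)] at hold
    omega
  -- small
  · intro i j hj hij
    have hhj : i < h j := by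
      by_cases h1 : j = j0
      · subst h1; rw [Function.update_self] at hij; omega
      · rwa [Function.update_of_ne h1] at hij
    have hcorner : ¬(i = 2*r-1 ∧ j = c-1) := by
      rintro ⟨rfl, _⟩
      have := H.hler j hj
      omega
    by_cases hpc : slidePath (2*r) c U (i+j) = (i,j)
    · have hk : i + j < e - 1 := by
        by_contra hcon
        push_neg at hcon
        rcases le_or_gt (i+j) (e-1+r) with h1 | h1
        · have hp := S.PH (i+j) hcon h1
          rw [hpc] at hp
          have e1 : i = i0 + (i+j-(e-1)) := congrArg Prod.fst hp
          have e2 : j = j0 := congrArg Prod.snd hp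
          subst e2
          rw [Function.update_self] at hij
          omega
        · have hp := S.PN (i+j) h1 (by have := H.hler j hj; omega)
          rw [hpc] at hp
          dsimp only at hp
          have := H.hler j hj
          omega
      rw [gromotion_on hcorner (by have := H.hler j hj; omega) hpc]
      have hreg := S.phase1 (i+j+1) (by omega)
      exact H.small _ _ hreg.1 hreg.2
    · rw [gromotion_off hcorner hpc]
      exact H.small i j hj hhj
  -- big
  · intro i j hj hup hir
    have hcorner : ¬(i = 2*r-1 ∧ j = c-1) := by rintro ⟨rfl, _⟩; omega
    by_cases h1 : j = j0
    · subst h1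
      rw [Function.update_self] at hup ⊢
      have hk1 : e-1 ≤ i + j := by omega
      have hk2 : i + j ≤ e-1+r := by omega
      have hpc : slidePath (2*r) c U (i+j) = (i, j) := by
        rw [S.PH (i+j) hk1 hk2, show i0 + (i+j-(e-1)) = i by omega]
      rw [gromotion_on hcorner (by omega) hpc]
      have hnx : slidePath (2*r) c U (i+j+1) = (i+1, j) := by
        rw [S.PH (i+j+1) (by omega) (by omega), show i0 + (i+j+1-(e-1)) = i+1 by omega]
      rw [hnx]
      dsimp only
      have := H.bigOrig (i+1) j hj0c (by omega) (by omega)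
      rw [this, show i+1-h j = i - i0 by omega]
    · rw [Function.update_of_ne h1] at hup ⊢
      have hpc : slidePath (2*r) c U (i+j) ≠ (i,j) := by
        intro hpc
        rcases Nat.lt_or_ge (i+j) e with hke | hke
        · have := (S.phase1 (i+j) hke).2
          rw [hpc] at this
          dsimp only at this
          omega
        · rcases le_or_gt (i+j) (e-1+r) with hk1 | hk1
          · have hp := S.PH (i+j) (by omega) hk1
            rw [hpc] at hp
            exact h1 (congrArg Prod.snd hp)
          · have hp := S.PN (i+j) hk1 (by omega)
            rw [hpc] at hp
            dsimp only at hp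
            omega
      rw [gromotion_off hcorner hpc]
      exact H.big i j hj hup hir
  -- orig
  · intro i' j hj hup
    by_cases h1 : j = j0
    · subst h1
      rw [Function.update_self] at hup ⊢
      have hcorner : ¬(r + i' = 2*r-1 ∧ j = c-1) := by rintro ⟨ha, _⟩; omega
      have hk1 : e-1 ≤ r+i'+j := by omega
      have hk2 : r+i'+j ≤ e-1+r := by omega
      have hpc : slidePath (2*r) c U (r+i'+j) = (r+i', j) := by
        rw [S.PH _ hk1 hk2, show i0 + (r+i'+j-(e-1)) = r+i' by omega]
      rw [gromotion_on hcorner (by omega) hpc]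
      have hnx : slidePath (2*r) c U (r+i'+j+1) = (r+i'+1, j) := by
        rw [S.PH _ (by omega) (by omega), show i0 + (r+i'+j+1-(e-1)) = r+i'+1 by omega]
      rw [hnx]
      dsimp only
      have := H.bigOrig (r+i'+1) j hj0c (by omega) (by omega)
      rw [this, show r+i'+1-h j = r - i0 + i' by omega]
    · rw [Function.update_of_ne h1] at hup ⊢
      have hhj : i' < h j := hup
      have hcorner : ¬(r + i' = 2*r-1 ∧ j = c-1) := by
        rintro ⟨ha, hb⟩
        -- j = c-1 ≠ j0, so j0+1 < c and heights to the right of j0 are ≤ i0 < r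
        have hj0c1 : j0 + 1 < c := by omega
        have h2 := S.east hj0c1
        have h3 : h (c-1) ≤ h (j0+1) := H.anti_le (by omega) (by omega)
        have : j = c - 1 := hb
        subst this
        omega
      have hpc : slidePath (2*r) c U (r+i'+j) ≠ (r+i', j) := by
        intro hpc
        rcases Nat.lt_or_ge (r+i'+j) e with hke | hke
        · have hreg := (S.phase1 _ hke)
          rw [hpc] at hreg
          dsimp only at hreg
          have := H.hler j hreg.1
          omega
        · rcases le_or_gt (r+i'+j) (e-1+r) with hk1 | hk1
          · have hp := S.PH _ (by omega) hk1
            rw [hpc] at hp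
            exact h1 (congrArg Prod.snd hp)
          · have hp := S.PN _ hk1 (by have := H.hler j hj; omega)
            rw [hpc] at hp
            dsimp only at hp
            omega
      rw [gromotion_off hcorner hpc]
      exact H.orig i' j hj hhj
  -- news
  · intro i' j hj hup hir
    by_cases hcor : (r + i' = 2*r-1 ∧ j = c-1)
    · obtain ⟨h1, h2⟩ := hcor
      have e1 : r + i' = 2*r-1 := h1
      have e2 : j = c-1 := h2
      rw [e1, e2, gromotion_corner, H.mx]
      omega
    · by_cases hpc : slidePath (2*r) c U (r+i'+j) = (r+i', j)
      · -- on the path: the next cell is in the news region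
        have hupge : i0 ≤ i' ∨ j ≠ j0 := by
          by_cases h1 : j = j0
          · subst h1; rw [Function.update_self] at hup; left; exact hup
          · right; exact h1
        have hk : e-1+r ≤ r+i'+j := by
          by_contra hcon
          push_neg at hcon
          rcases Nat.lt_or_ge (r+i'+j) e with hke | hke
          · have hreg := S.phase1 _ hke
            rw [hpc] at hreg
            dsimp only at hreg
            have := H.hler j hreg.1
            omega
          · have hp := S.PH (r+i'+j) (by omega) (by omega)
            rw [hpc] at hp
            have e2 : j = j0 := congrArg Prod.snd hp
            have e1 : r + i' = i0 + (r+i'+j-(e-1)) := congrArg Prod.fst hp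
            rcases hupge with hg | hg
            · omega
            · exact hg e2
        have hkk : r+i'+j < 2*r+c-2 := hkbound _ _ (by omega) hj hcor
        rw [gromotion_on hcor hkk hpc]
        have hp := S.PN (r+i'+j+1) (by omega) (by omega)
        have := H.newsVal _ _ hp.1 hp.2.1 hp.2.2
        omega
      · -- off the path: the old value was already a news value
        have hne : ¬ (j = j0 ∧ i' = i0) := by
          rintro ⟨h1, h2⟩
          subst h1; subst h2
          apply hpc
          rw [S.PH (r+i'+j) (by omega) (by omega), show i' + (r+i'+j-(e-1)) = r+i' by omega]
        have hold : h j ≤ i' := by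
          by_cases h1 : j = j0
          · subst h1
            rw [Function.update_self] at hup
            have : i' ≠ i0 := fun hcon => hne ⟨rfl, hcon⟩
            omega
          · rwa [Function.update_of_ne h1] at hup
        have hcorner2 : ¬(r + i' = 2*r-1 ∧ j = c-1) := hcor
        rw [gromotion_off hcorner2 hpc]
        have := H.newsVal (r+i') j hj (by omega) (by omega)
        omega
  -- mx
  · refine le_antisymm (maxEntry_le ?_) ?_
    · intro i j hi hj
      by_cases hcor : (i = 2*r-1 ∧ j = c-1)
      · obtain ⟨h1, h2⟩ := hcor
        rw [h1, h2, gromotion_corner, H.mx]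
        omega
      · by_cases hpc : slidePath (2*r) c U (i+j) = (i,j)
        · have hkk : i+j < 2*r+c-2 := hkbound _ _ hi hj hcor
          rw [gromotion_on hcor hkk hpc]
          have hg := S.grid hr hc H (i+j+1) (by omega)
          have := le_maxEntry (U := U) hg.1 hg.2
          rw [H.mx] at this
          omega
        · rw [gromotion_off hcor hpc]
          have := le_maxEntry (U := U) hi hj
          rw [H.mx] at this
          omega
    · have hgc := le_maxEntry (U := gromotion (2*r) c U)
        (show 2*r-1 < 2*r by omega) (show c-1 < c by omega)
      rw [gromotion_corner, H.mx] at hgc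
      omega

end SlideData

end Dynamics5
section Dynamics6

variable {r c : ℕ} {P Q : ℕ → ℕ → ℕ}

lemma inv_zero (hr : 0 < r) (hc : 0 < c) (hP : IsSYT r c P) (hQ : IsSYT r c Q) :
    Inv r c 0 Q (stack r c P Q) (fun _ => r) := by
  constructor
  · intro j hj; exact le_rfl
  · intro j hj; exact le_rfl
  · simp
  · intro i j hj hi
    rw [stack, if_pos hi]
    exact (isSYT_mem hP hi hj).2
  · intro i j hj h1 h2; omega
  · intro i j hj hi
    rw [stack, if_neg (by omega)]
    rw [show r + i - r = i by omega, show r - r + i = i by omega]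
    exact Nat.add_comm _ _
  · intro i j hj h1 h2; omega
  · refine le_antisymm (maxEntry_le ?_) ?_
    · intro i j hi hj
      rw [stack]
      split
      · have := (isSYT_mem hP (by assumption) hj).2
        omega
      · have := (isSYT_mem hQ (show i - r < r by omega) hj).2
        omega
    · have hsurj := hQ.2.2.surjOn (Set.mem_Icc.mpr ⟨Nat.mul_pos hr hc, le_rfl⟩ :
        r * c ∈ Set.Icc 1 (r * c))
      obtain ⟨p, hp, hpv⟩ := hsurj
      rw [Set.mem_setOf_eq] at hp
      have := le_maxEntry (U := stack r c P Q) (i := r + p.1) (j := p.2)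
        (show r + p.1 < 2*r by omega) hp.2
      rw [stack, if_neg (by omega), show r + p.1 - r = p.1 by omega] at this
      simp only at hpv
      omega

/-- `Good x hh j0`: the slide from time `x` to `x+1` crosses at column `j0`. -/
def Good (r c : ℕ) (P Q : ℕ → ℕ → ℕ) (x : ℕ) (hh : ℕ → ℕ) (j0 : ℕ) : Prop :=
  j0 < c ∧ 1 ≤ hh j0 ∧
  Inv r c (x+1) Q ((gromotion (2*r) c)^[x+1] (stack r c P Q))
    (Function.update hh j0 (hh j0 - 1)) ∧
  ∀ m, 1 ≤ m → m ≤ r →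
    (hh j0 ≤ m → slideInto (2*r) c ((gromotion (2*r) c)^[x] (stack r c P Q)) m
        = r*c + Q (m - hh j0) j0) ∧
    (m < hh j0 → slideInto (2*r) c ((gromotion (2*r) c)^[x] (stack r c P Q)) m ≤ r*c)

lemma good_exists (hr : 0 < r) (hc : 0 < c) (hQ : IsSYT r c Q) {x : ℕ} (hx : x < r * c)
    {hh : ℕ → ℕ} (H : Inv r c x Q ((gromotion (2*r) c)^[x] (stack r c P Q)) hh) :
    ∃ j0, Good r c P Q x hh j0 := by
  obtain ⟨e, i0, j0, S⟩ := slide_data hr hc hQ hx H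
  refine ⟨j0, S.j0c, by have := S.hh0; omega, ?_, ?_⟩
  · rw [Function.iterate_succ_apply']
    have := S.inv_step hr hc hQ hx H
    rwa [show hh j0 - 1 = i0 by have := S.hh0; omega]
  · exact S.slideInto_eq hr hc hQ H

open Classical in
noncomputable def Hh (r c : ℕ) (P Q : ℕ → ℕ → ℕ) : ℕ → ℕ → ℕ
  | 0 => fun _ => r
  | (x+1) =>
    if hg : ∃ j0, Good r c P Q x (Hh r c P Q x) j0 then
      Function.update (Hh r c P Q x) hg.choose (Hh r c P Q x hg.choose - 1)
    else Hh r c P Q x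

lemma Hh_succ_of {r c : ℕ} {P Q : ℕ → ℕ → ℕ} {x : ℕ}
    (hg : ∃ j0, Good r c P Q x (Hh r c P Q x) j0) :
    Hh r c P Q (x+1) = Function.update (Hh r c P Q x) hg.choose
      (Hh r c P Q x hg.choose - 1) := by
  rw [Hh]
  rw [dif_pos hg]

lemma inv_Hh (hr : 0 < r) (hc : 0 < c) (hP : IsSYT r c P) (hQ : IsSYT r c Q) :
    ∀ x, x ≤ r * c →
      Inv r c x Q ((gromotion (2*r) c)^[x] (stack r c P Q)) (Hh r c P Q x) := by
  intro x
  induction x with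
  | zero =>
    intro _
    simpa [Hh] using inv_zero hr hc hP hQ
  | succ x ih =>
    intro hx
    have H := ih (by omega)
    have hg : ∃ j0, Good r c P Q x (Hh r c P Q x) j0 :=
      good_exists hr hc hQ (by omega) H
    rw [Hh_succ_of hg]
    exact hg.choose_spec.2.2.1

lemma good_Hh (hr : 0 < r) (hc : 0 < c) (hP : IsSYT r c P) (hQ : IsSYT r c Q) :
    ∀ x, x < r * c → ∃ j0, Good r c P Q x (Hh r c P Q x) j0 ∧
      Hh r c P Q (x+1) = Function.update (Hh r c P Q x) j0 (Hh r c P Q x j0 - 1) := by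
  intro x hx
  have hg : ∃ j0, Good r c P Q x (Hh r c P Q x) j0 :=
    good_exists hr hc hQ hx (inv_Hh hr hc hP hQ x (by omega))
  exact ⟨hg.choose, hg.choose_spec, Hh_succ_of hg⟩

lemma hh_le_succ (hr : 0 < r) (hc : 0 < c) (hP : IsSYT r c P) (hQ : IsSYT r c Q)
    {x : ℕ} (hx : x < r * c) (j : ℕ) : Hh r c P Q (x+1) j ≤ Hh r c P Q x j := by
  obtain ⟨j0, hg, hupd⟩ := good_Hh hr hc hP hQ x hx
  rw [hupd]
  by_cases h1 : j = j0
  · subst h1; rw [Function.update_self]; omega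
  · rw [Function.update_of_ne h1]

lemma hh_mono (hr : 0 < r) (hc : 0 < c) (hP : IsSYT r c P) (hQ : IsSYT r c Q)
    (j : ℕ) : ∀ a b : ℕ, a ≤ b → b ≤ r * c → Hh r c P Q b j ≤ Hh r c P Q a j := by
  intro a b hab hbn
  induction b with
  | zero => have : a = 0 := by omega
            subst this; exact le_rfl
  | succ b ih =>
    rcases Nat.eq_or_lt_of_le hab with he | hlt
    · rw [he]
    · exact le_trans (hh_le_succ hr hc hP hQ (by omega) j) (ih (by omega) (by omega))

lemma hh_final (hr : 0 < r) (hc : 0 < c) (hP : IsSYT r c P) (hQ : IsSYT r c Q)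
    (j : ℕ) (hj : j < c) : Hh r c P Q (r*c) j = 0 := by
  have H := inv_Hh hr hc hP hQ (r*c) le_rfl
  by_contra hcon
  have hpos : 1 ≤ Hh r c P Q (r*c) j := by omega
  have hlt : (∑ j' ∈ Finset.range c, (r - Hh r c P Q (r*c) j')) <
      ∑ _j' ∈ Finset.range c, r := by
    refine Finset.sum_lt_sum (fun j' _ => by omega) ⟨j, Finset.mem_range.mpr hj, ?_⟩
    have := H.hler j hj
    omega
  rw [H.hsum] at hlt
  simp only [Finset.sum_const, Finset.card_range, smul_eq_mul] at hlt
  rw [Nat.mul_comm c r] at hlt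
  omega

/-- crossing time of cell `(t, j)`: the unique slide turning `Hh · j` from `t+1` to `t`. -/
lemma cross_exists (hr : 0 < r) (hc : 0 < c) (hP : IsSYT r c P) (hQ : IsSYT r c Q)
    {t j : ℕ} (ht : t < r) (hj : j < c) :
    ∃ x, x < r * c ∧ Hh r c P Q x j = t + 1 ∧ Hh r c P Q (x+1) j = t ∧
      (∀ j', j' ≠ j → Hh r c P Q (x+1) j' = Hh r c P Q x j') ∧
      Good r c P Q x (Hh r c P Q x) j := by
  have hn1 : 1 ≤ r * c := Nat.mul_pos hr hc
  have hex : ∃ x, x < r * c ∧ Hh r c P Q (x+1) j ≤ t := by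
    refine ⟨r*c - 1, by omega, ?_⟩
    rw [show r*c - 1 + 1 = r*c by omega, hh_final hr hc hP hQ j hj]
    omega
  classical
  obtain ⟨hspec, hmin⟩ : (Nat.find hex < r * c ∧ Hh r c P Q (Nat.find hex + 1) j ≤ t) ∧
      ∀ y, y < Nat.find hex → ¬(y < r * c ∧ Hh r c P Q (y+1) j ≤ t) :=
    ⟨Nat.find_spec hex, fun y hy => Nat.find_min hex hy⟩
  set x := Nat.find hex with hxdef
  have hx : x < r * c := hspec.1
  have hxle : Hh r c P Q (x+1) j ≤ t := hspec.2
  have hxgt : t + 1 ≤ Hh r c P Q x j := by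
    rcases Nat.eq_zero_or_pos x with h0 | h0
    · rw [h0]
      show t + 1 ≤ Hh r c P Q 0 j
      simp [Hh]
      omega
    · have := hmin (x-1) (by omega)
      push_neg at this
      have h2 := this (by omega)
      rw [show x - 1 + 1 = x by omega] at h2
      omega
  obtain ⟨j0, hg, hupd⟩ := good_Hh hr hc hP hQ x hx
  have hj0 : j0 = j := by
    by_contra hcon
    have : Hh r c P Q (x+1) j = Hh r c P Q x j := by
      rw [hupd, Function.update_of_ne (fun hc2 => hcon hc2.symm)]
    omega
  rw [hj0] at hg hupd
  have h1 : Hh r c P Q (x+1) j = Hh r c P Q x j - 1 := by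
    rw [hupd, Function.update_self]
  refine ⟨x, hx, by omega, by omega, ?_, hg⟩
  intro j' hj'
  rw [hupd, Function.update_of_ne hj']

/-- `Bf t j = n + 1 - (crossing slide number of (t,j))`. -/
noncomputable def Bf (r c : ℕ) (P Q : ℕ → ℕ → ℕ) (t j : ℕ) : ℕ :=
  ((Finset.range (r*c)).filter (fun x => Hh r c P Q (x+1) j ≤ t)).card

lemma Bf_at_cross (hr : 0 < r) (hc : 0 < c) (hP : IsSYT r c P) (hQ : IsSYT r c Q)
    {x j : ℕ} (hx : x < r * c) (hj : j < c)
    (hdrop : Hh r c P Q (x+1) j < Hh r c P Q x j) :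
    Bf r c P Q (Hh r c P Q (x+1) j) j = r * c - x := by
  rw [Bf]
  have hset : (Finset.range (r*c)).filter (fun y => Hh r c P Q (y+1) j ≤ Hh r c P Q (x+1) j)
      = Finset.Ico x (r*c) := by
    ext y
    simp only [Finset.mem_filter, Finset.mem_range, Finset.mem_Ico]
    constructor
    · rintro ⟨hy, hle⟩
      refine ⟨?_, hy⟩
      by_contra hcon
      push_neg at hcon
      have := hh_mono hr hc hP hQ j (y+1) x (by omega) (by omega)
      omega
    · rintro ⟨hxy, hy⟩
      exact ⟨hy, hh_mono hr hc hP hQ j (x+1) (y+1) (by omega) (by omega)⟩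
  rw [hset, Nat.card_Ico]

lemma Bf_gmono (hr : 0 < r) (hc : 0 < c) (hP : IsSYT r c P) (hQ : IsSYT r c Q) :
    GMono r c (Bf r c P Q) := by
  constructor
  · -- strict in the column index
    intro t j j' htr hjj hj'
    have hsub : (Finset.range (r*c)).filter (fun x => Hh r c P Q (x+1) j ≤ t) ⊆
        (Finset.range (r*c)).filter (fun x => Hh r c P Q (x+1) j' ≤ t) := by
      intro y hy
      simp only [Finset.mem_filter, Finset.mem_range] at hy ⊢
      refine ⟨hy.1, le_trans ?_ hy.2⟩
      exact (inv_Hh hr hc hP hQ (y+1) (by omega)).anti_le (le_of_lt hjj) hj'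
    obtain ⟨x, hx, hx1, hx2, hother, hg⟩ := cross_exists hr hc hP hQ htr hj'
    have hwit : x ∈ (Finset.range (r*c)).filter (fun y => Hh r c P Q (y+1) j' ≤ t) := by
      simp only [Finset.mem_filter, Finset.mem_range]
      omega
    have hnot : x ∉ (Finset.range (r*c)).filter (fun y => Hh r c P Q (y+1) j ≤ t) := by
      simp only [Finset.mem_filter, Finset.mem_range, not_and, not_le]
      intro _
      have he := hother j (by omega)
      have := (inv_Hh hr hc hP hQ x (by omega)).anti_le (le_of_lt hjj) hj'
      omega
    exact Finset.card_lt_card (Finset.ssubset_iff_of_subset hsub |>.mpr ⟨x, hwit, hnot⟩)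
  · -- strict in the row index
    intro t t' j htt ht' hj
    have hsub : (Finset.range (r*c)).filter (fun x => Hh r c P Q (x+1) j ≤ t) ⊆
        (Finset.range (r*c)).filter (fun x => Hh r c P Q (x+1) j ≤ t') := by
      intro y hy
      simp only [Finset.mem_filter, Finset.mem_range] at hy ⊢
      omega
    obtain ⟨x, hx, hx1, hx2, hother, hg⟩ := cross_exists hr hc hP hQ ht' hj
    have hwit : x ∈ (Finset.range (r*c)).filter (fun y => Hh r c P Q (y+1) j ≤ t') := by
      simp only [Finset.mem_filter, Finset.mem_range]
      omega
    have hnot : x ∉ (Finset.range (r*c)).filter (fun y => Hh r c P Q (y+1) j ≤ t) := by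
      simp only [Finset.mem_filter, Finset.mem_range, not_and, not_le]
      omega
    exact Finset.card_lt_card (Finset.ssubset_iff_of_subset hsub |>.mpr ⟨x, hwit, hnot⟩)

end Dynamics6
section Final

variable {r c : ℕ} {P Q : ℕ → ℕ → ℕ}

lemma resid_big {n q : ℕ} (hn : 1 ≤ n) (hq1 : 1 ≤ q) (hqn : q ≤ n) :
    (n + q - 1) % (2*n) + 1 = n + q := by
  rw [Nat.mod_eq_of_lt (by omega)]
  omega

lemma resid_small {n v : ℕ} (hn : 1 ≤ n) (hv : v ≤ n) :
    (v - 1) % (2*n) + 1 ≤ n := by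
  rw [Nat.mod_eq_of_lt (by omega)]
  omega

lemma pointsNE_eq (hr : 0 < r) (hc : 0 < c) (hP : IsSYT r c P) (hQ : IsSYT r c Q)
    {m : ℕ} (hm1 : 1 ≤ m) (hmr : m ≤ r) :
    pointsNE (r*c) (promPerm (2*r) c (stack r c P Q) m) = bandSet Q (Bf r c P Q) m c := by
  have hn1 : 1 ≤ r * c := Nat.mul_pos hr hc
  have hma : (2*r)*c = 2*(r*c) := Nat.mul_assoc 2 r c
  ext p
  constructor
  · rintro ⟨x, hx1, hxn, hgt, rfl⟩
    have hx' : x - 1 < r * c := by omega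
    obtain ⟨j0, hg, hupd⟩ := good_Hh hr hc hP hQ (x-1) hx'
    obtain ⟨hj0c, hpos, hinv, hslide⟩ := hg
    rcases Nat.lt_or_ge m (Hh r c P Q (x-1) j0) with hsmall | hbig
    · exfalso
      have hv := (hslide m hm1 hmr).2 hsmall
      rw [promPerm, hma] at hgt
      have := resid_small (v := slideInto (2*r) c
        ((gromotion (2*r) c)^[x-1] (stack r c P Q)) m) hn1 hv
      omega
    · have hv := (hslide m hm1 hmr).1 hbig
      have hsr : m - Hh r c P Q (x-1) j0 < r := by omega
      obtain ⟨hq1, hqn⟩ := isSYT_mem hQ hsr hj0c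
      have hfx : promPerm (2*r) c (stack r c P Q) m x
          = r*c + Q (m - Hh r c P Q (x-1) j0) j0 := by
        rw [promPerm, hma, hv]
        exact resid_big hn1 hq1 hqn
      have hdrop : Hh r c P Q ((x-1)+1) j0 < Hh r c P Q (x-1) j0 := by
        rw [hupd, Function.update_self]
        omega
      have ht : Hh r c P Q ((x-1)+1) j0 = Hh r c P Q (x-1) j0 - 1 := by
        rw [hupd, Function.update_self]
      have hBf := Bf_at_cross hr hc hP hQ hx' hj0c hdrop
      refine ⟨m - Hh r c P Q (x-1) j0, Hh r c P Q ((x-1)+1) j0, j0, hj0c, by omega, ?_⟩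
      rw [hfx, hBf]
      rw [Prod.mk.injEq]
      constructor
      · push_cast
        ring
      · have hxx : x - 1 ≤ r * c := by omega
        push_cast [Nat.cast_sub (by omega : x - 1 ≤ r * c)]
        omega
  · rintro ⟨s, t, j, hjc, hst, rfl⟩
    have hsr : s < r := by omega
    have htr : t < r := by omega
    obtain ⟨x', hx', hxv, hxv1, hother, hgood⟩ := cross_exists hr hc hP hQ htr hjc
    obtain ⟨hj0c, hpos, hinv, hslide⟩ := hgood
    have hv := (hslide m hm1 hmr).1 (by omega)
    rw [hxv, show m - (t+1) = s by omega] at hv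
    obtain ⟨hq1, hqn⟩ := isSYT_mem hQ hsr hjc
    have hfx : promPerm (2*r) c (stack r c P Q) m (x'+1) = r*c + Q s j := by
      rw [promPerm, hma, show x'+1-1 = x' by omega, hv]
      exact resid_big hn1 hq1 hqn
    have hdrop : Hh r c P Q (x'+1) j < Hh r c P Q x' j := by omega
    have hBf := Bf_at_cross hr hc hP hQ hx' hjc hdrop
    rw [hxv1] at hBf
    refine ⟨x'+1, by omega, by omega, ?_, ?_⟩
    · rw [hfx]; omega
    · rw [hfx, hBf]
      rw [Prod.mk.injEq]
      constructor
      · push_cast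
        ring
      · push_cast [Nat.cast_sub (by omega : x' ≤ r * c)]
        omega

lemma minimalsUnder_empty' (d : ℤ × ℤ → ℤ × ℤ → Prop) : minimalsUnder d ∅ = ∅ := by
  simp [minimalsUnder]

lemma skeleton_empty (d : ℤ × ℤ → ℤ × ℤ → Prop) : skeleton d ∅ = ∅ := by
  have hrest : ∀ K, shadowRest d (∅ : Set (ℤ × ℤ)) K = ∅ := by
    intro K
    induction K with
    | zero => rfl
    | succ K ih => rw [shadowRest, ih, Set.empty_diff]
  ext p
  simp only [skeleton, Set.mem_iUnion, Set.mem_empty_iff_false, iff_false, not_exists]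
  intro K
  rw [shadowLine]
  simp only [Nat.add_sub_cancel]
  rw [hrest K, minimalsUnder_empty', lineSkeleton_empty]
  exact Set.notMem_empty p

lemma skeletonIter_empty (d : ℤ × ℤ → ℤ × ℤ → Prop) (k : ℕ) :
    skeletonIter d (∅ : Set (ℤ × ℤ)) k = ∅ := by
  induction k with
  | zero => rfl
  | succ k ih =>
    rw [skeletonIter, Function.iterate_succ_apply']
    rw [show (skeleton d)^[k] (∅ : Set (ℤ × ℤ)) = skeletonIter d ∅ k from rfl, ih]
    exact skeleton_empty d

end Final
section Main

lemma pointsNE_zero (f : ℕ → ℕ) : pointsNE 0 f = ∅ := by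
  ext p
  simp only [pointsNE, Set.mem_setOf_eq, Set.mem_empty_iff_false, iff_false, not_exists]
  intro x
  rintro ⟨h1, h2, _⟩
  omega

theorem pointsNE_promPerm_eq_skeletonIter_SW' (r c : ℕ) (P Q : ℕ → ℕ → ℕ)
    (hP : IsSYT r c P) (hQ : IsSYT r c Q) (k : ℕ) (hk : k ≤ r - 1) :
    pointsNE (r * c) (promPerm (2 * r) c (stack r c P Q) (r - k)) =
      skeletonIter dirSW
        (pointsNE (r * c) (promPerm (2 * r) c (stack r c P Q) r)) k := by
  rcases Nat.eq_zero_or_pos r with hr0 | hr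
  · subst hr0
    have hk0 : k = 0 := by omega
    subst hk0
    rfl
  rcases Nat.eq_zero_or_pos c with hc0 | hc
  · subst hc0
    rw [Nat.mul_zero, pointsNE_zero, pointsNE_zero, skeletonIter_empty]
  · induction k with
    | zero => rfl
    | succ k ih =>
      have hk' : k ≤ r - 1 := by omega
      rw [skeletonIter, Function.iterate_succ_apply']
      rw [show (skeleton dirSW)^[k]
            (pointsNE (r*c) (promPerm (2*r) c (stack r c P Q) r)) =
          skeletonIter dirSW
            (pointsNE (r*c) (promPerm (2*r) c (stack r c P Q) r)) k from rfl]
      rw [← ih hk']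
      rw [pointsNE_eq hr hc hP hQ (show 1 ≤ r - k by omega) (by omega),
        pointsNE_eq hr hc hP hQ (show 1 ≤ r - (k+1) by omega) (by omega)]
      rw [skeleton_bandSet (isSYT_gmono hQ) (Bf_gmono hr hc hP hQ)
        (show 2 ≤ r - k by omega) (by omega)]
      rw [show r - k - 1 = r - (k+1) by omega]

end Main

/-- For `S = stack(P, Q)` with `P, Q ∈ SYT(r × c)`, `n = rc`, and
`ρ_i := prom_i(S)`, for all `0 ≤ k ≤ r - 1` the point set `𝒫^NE(ρ_{r-k})` equals the
`k`-th iterated skeleton `𝒮^k(𝒫^NE(ρ_r), ↙)`. -/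
theorem pointsNE_promPerm_eq_skeletonIter_SW (r c : ℕ) (P Q : ℕ → ℕ → ℕ)
    (hP : IsSYT r c P) (hQ : IsSYT r c Q) (k : ℕ) (hk : k ≤ r - 1) :
    pointsNE (r * c) (promPerm (2 * r) c (stack r c P Q) (r - k)) =
      skeletonIter dirSW
        (pointsNE (r * c) (promPerm (2 * r) c (stack r c P Q) r)) k :=
  pointsNE_promPerm_eq_skeletonIter_SW' r c P Q hP hQ k hk

end PromRS
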